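/- arXiv:2401.03328 — 8 statements merged into one kernel-verified Lean document; each statement's English description precedes it below -/
import Mathlib

section
/- Counter-monotonic improvement under strong external randomization: Let X_1,...,X_n be nonnegative integrable random variables, X = ∑_{i=1}^n X_i, and suppose U is a uniform random variable on [0,1] independent of (X_1,...,X_n). Define Z_0 = 0, Z_i = (∑_{j≤i} X_j / X)·1_{X>0}, A_i = {Z_{i−1} ≤ U < Z_i}, and Y_i = X·1_{A_i}. Then (Y_1,...,Y_n) is a jackpot allocation of X (in particular ∑ Y_i = X a.s. and Y_i·Y_j = 0 for i ≠ j), and E[Y_i | X_1,...,X_n] = X_i almost surely for every i; consequently X_i ≤_cx Y_i for each i. -/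
open MeasureTheory Set ProbabilityTheory

/-- Key computational lemma: if `U` is uniform on `[0,1]` independent of `T`, and
`0 ≤ g ∘ T ≤ h ∘ T ≤ 1`, then integrating `ψ(T)` over the random interval event
`{g(T) ≤ U < h(T)}` equals integrating `ψ(T)·(h(T) - g(T))`. -/
lemma key_lemma {Ω : Type*} [MeasurableSpace Ω] (P : Measure Ω) [IsProbabilityMeasure P]
    {β : Type*} [MeasurableSpace β] (T : Ω → β) (U : Ω → ℝ)
    (hT : Measurable T) (hU : Measurable U)
    (hUlaw : P.map U = (volume : Measure ℝ).restrict (Icc 0 1))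
    (hindep : IndepFun T U P)
    (g h : β → ℝ) (hg : Measurable g) (hh : Measurable h)
    (hr : ∀ ω, 0 ≤ g (T ω) ∧ g (T ω) ≤ h (T ω) ∧ h (T ω) ≤ 1)
    (ψ : β → ℝ) (hψ : Measurable ψ)
    (hI : Integrable (fun ω => if g (T ω) ≤ U ω ∧ U ω < h (T ω) then ψ (T ω) else 0) P) :
    Integrable (fun ω => ψ (T ω) * (h (T ω) - g (T ω))) P ∧
    ∫ ω, (if g (T ω) ≤ U ω ∧ U ω < h (T ω) then ψ (T ω) else 0) ∂P
      = ∫ ω, ψ (T ω) * (h (T ω) - g (T ω)) ∂P := by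
  classical
  have hW : Measurable fun ω => (T ω, U ω) := hT.prodMk hU
  haveI : IsProbabilityMeasure (P.map T) := Measure.isProbabilityMeasure_map hT.aemeasurable
  haveI : IsProbabilityMeasure (P.map U) := Measure.isProbabilityMeasure_map hU.aemeasurable
  have hmap : P.map (fun ω => (T ω, U ω)) = (P.map T).prod (P.map U) :=
    (indepFun_iff_map_prod_eq_prod_map_map hT.aemeasurable hU.aemeasurable).mp hindep
  set f : β × ℝ → ℝ := fun p => if g p.1 ≤ p.2 ∧ p.2 < h p.1 then ψ p.1 else 0 with hfdef
  have hsetm : MeasurableSet {p : β × ℝ | g p.1 ≤ p.2 ∧ p.2 < h p.1} :=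
    (measurableSet_le (hg.comp measurable_fst) measurable_snd).inter
      (measurableSet_lt measurable_snd (hh.comp measurable_fst))
  have hfmeas : Measurable f :=
    Measurable.ite hsetm (hψ.comp measurable_fst) measurable_const
  have hfW : (fun ω => f (T ω, U ω))
      = fun ω => if g (T ω) ≤ U ω ∧ U ω < h (T ω) then ψ (T ω) else 0 := rfl
  have hfint : Integrable f ((P.map T).prod (P.map U)) := by
    rw [← hmap]
    rw [integrable_map_measure hfmeas.aestronglyMeasurable hW.aemeasurable]
    exact hI
  have hae : ∀ᵐ t ∂(P.map T), 0 ≤ g t ∧ g t ≤ h t ∧ h t ≤ 1 := by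
    have hms : MeasurableSet {t : β | 0 ≤ g t ∧ g t ≤ h t ∧ h t ≤ 1} :=
      (measurableSet_le measurable_const hg).inter
        ((measurableSet_le hg hh).inter (measurableSet_le hh measurable_const))
    rw [ae_map_iff hT.aemeasurable hms]
    exact ae_of_all _ hr
  have hinner : ∀ᵐ t ∂(P.map T), (∫ u, f (t, u) ∂(P.map U)) = ψ t * (h t - g t) := by
    filter_upwards [hae] with t ht
    have h1 : (fun u => f (t, u)) = (Ico (g t) (h t)).indicator (fun _ => ψ t) := by
      funext u
      simp only [hfdef, Set.indicator_apply, mem_Ico]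
    rw [h1, integral_indicator_const _ measurableSet_Ico, hUlaw,
      measureReal_def, Measure.restrict_apply measurableSet_Ico]
    have h2 : Ico (g t) (h t) ∩ Icc (0:ℝ) 1 = Ico (g t) (h t) := by
      apply inter_eq_left.mpr
      intro x hx
      exact ⟨le_trans ht.1 hx.1, le_of_lt (lt_of_lt_of_le hx.2 ht.2.2)⟩
    rw [h2, Real.volume_Ico, ENNReal.toReal_ofReal (sub_nonneg.mpr ht.2.1),
      smul_eq_mul, mul_comm]
  have hmeas2 : Measurable fun t => ψ t * (h t - g t) := hψ.mul (hh.sub hg)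
  have hIR' : Integrable (fun t => ψ t * (h t - g t)) (P.map T) :=
    (hfint.integral_prod_left).congr hinner
  have hIR : Integrable (fun ω => ψ (T ω) * (h (T ω) - g (T ω))) P :=
    (integrable_map_measure hmeas2.aestronglyMeasurable hT.aemeasurable).mp hIR'
  refine ⟨hIR, ?_⟩
  calc ∫ ω, (if g (T ω) ≤ U ω ∧ U ω < h (T ω) then ψ (T ω) else 0) ∂P
      = ∫ ω, f (T ω, U ω) ∂P := by rw [hfW]
    _ = ∫ p, f p ∂(P.map (fun ω => (T ω, U ω))) :=
        (integral_map hW.aemeasurable hfmeas.aestronglyMeasurable).symm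
    _ = ∫ p, f p ∂((P.map T).prod (P.map U)) := by rw [hmap]
    _ = ∫ t, ∫ u, f (t, u) ∂(P.map U) ∂(P.map T) := integral_prod f hfint
    _ = ∫ t, ψ t * (h t - g t) ∂(P.map T) := integral_congr_ae hinner
    _ = ∫ ω, ψ (T ω) * (h (T ω) - g (T ω)) ∂P :=
        integral_map hT.aemeasurable hmeas2.aestronglyMeasurable

/-- Counter-monotonic improvement under strong external randomization: the explicit
construction `Y_i = X·1_{A_i}`, with `A_i = {Z_{i-1} ≤ U < Z_i}` built from a uniform `U`
independent of `(X_1,...,X_n)`, is a jackpot allocation of `X = ∑ X_i` satisfying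
`E[Y_i | X_1,...,X_n] = X_i` a.s.; consequently `X_i ≤_cx Y_i`. -/
theorem stmt2 {Ω : Type*} [MeasurableSpace Ω] (P : Measure Ω) [IsProbabilityMeasure P]
    {n : ℕ} (Xv : Fin n → Ω → ℝ) (hmeas : ∀ i, Measurable (Xv i))
    (hint : ∀ i, Integrable (Xv i) P) (hpos : ∀ i ω, 0 ≤ Xv i ω)
    (X : Ω → ℝ) (hX : ∀ ω, X ω = ∑ i, Xv i ω)
    (U : Ω → ℝ) (hUm : Measurable U)
    (hUlaw : P.map U = (volume : Measure ℝ).restrict (Icc 0 1))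
    (hUindep : IndepFun U (fun ω (i : Fin n) => Xv i ω) P)
    (Z : ℕ → Ω → ℝ)
    (hZ : ∀ k ω, Z k ω =
      (∑ j ∈ Finset.univ.filter (fun j : Fin n => (j : ℕ) < k), Xv j ω) / X ω)
    (A : Fin n → Set Ω)
    (hA : ∀ i, A i = {ω | Z (i : ℕ) ω ≤ U ω ∧ U ω < Z ((i : ℕ) + 1) ω})
    (Y : Fin n → Ω → ℝ)
    (hY : ∀ i ω, Y i ω = X ω * (A i).indicator 1 ω) :
    (∀ᵐ ω ∂P, ∑ i, Y i ω = X ω) ∧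
    (∀ i j, i ≠ j → ∀ ω, Y i ω * Y j ω = 0) ∧
    (∀ i, P[Y i | MeasurableSpace.comap (fun ω (j : Fin n) => Xv j ω) MeasurableSpace.pi]
        =ᵐ[P] Xv i) ∧
    (∀ i (φ : ℝ → ℝ), ConvexOn ℝ univ φ →
      Integrable (fun ω => φ (Xv i ω)) P → Integrable (fun ω => φ (Y i ω)) P →
      ∫ ω, φ (Xv i ω) ∂P ≤ ∫ ω, φ (Y i ω) ∂P) := by
  classical
  set T : Ω → (Fin n → ℝ) := fun ω (j : Fin n) => Xv j ω with hTdef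
  have hT : Measurable T := measurable_pi_lambda _ hmeas
  have hXeq : X = fun ω => ∑ i, Xv i ω := funext hX
  have hXm : Measurable X := by rw [hXeq]; exact Finset.measurable_sum _ fun i _ => hmeas i
  have hXint : Integrable X P := by
    rw [hXeq]; exact integrable_finset_sum _ fun i _ => hint i
  have hX0 : ∀ ω, 0 ≤ X ω := fun ω =>
    (hX ω) ▸ Finset.sum_nonneg fun i _ => hpos i ω
  have hXvle : ∀ i ω, Xv i ω ≤ X ω := fun i ω =>
    (hX ω) ▸ Finset.single_le_sum (fun j _ => hpos j ω) (Finset.mem_univ i)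
  -- monotonicity of Z
  have hSmono : ∀ (k l : ℕ), k ≤ l → ∀ ω, Z k ω ≤ Z l ω := by
    intro k l hkl ω
    rw [hZ, hZ]
    have hnum : (∑ j ∈ Finset.univ.filter (fun j : Fin n => (j : ℕ) < k), Xv j ω)
        ≤ ∑ j ∈ Finset.univ.filter (fun j : Fin n => (j : ℕ) < l), Xv j ω := by
      apply Finset.sum_le_sum_of_subset_of_nonneg
      · intro j hj
        simp only [Finset.mem_filter, Finset.mem_univ, true_and] at *
        exact lt_of_lt_of_le hj hkl
      · exact fun j _ _ => hpos j ω
    rcases eq_or_lt_of_le (hX0 ω) with h0 | h0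
    · rw [← h0, div_zero, div_zero]
    · gcongr
  have hZnn : ∀ k ω, 0 ≤ Z k ω := fun k ω => by
    rw [hZ]
    exact div_nonneg (Finset.sum_nonneg fun j _ => hpos j ω) (hX0 ω)
  have hZle1 : ∀ k ω, Z k ω ≤ 1 := fun k ω => by
    rw [hZ]
    refine div_le_one_of_le₀ ?_ (hX0 ω)
    rw [hX]
    exact Finset.sum_le_sum_of_subset_of_nonneg (Finset.filter_subset _ _)
      fun j _ _ => hpos j ω
  have hZzero : ∀ ω, Z 0 ω = 0 := fun ω => by
    rw [hZ]
    simp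
  have hZtop : ∀ ω, X ω ≠ 0 → Z n ω = 1 := by
    intro ω hω
    rw [hZ]
    have h1 : Finset.univ.filter (fun j : Fin n => (j : ℕ) < n) = Finset.univ :=
      Finset.filter_true_of_mem fun j _ => j.isLt
    rw [h1, ← hX ω, div_self hω]
  -- the increments of Z
  have hdiffnum : ∀ (i : Fin n) ω,
      (∑ j ∈ Finset.univ.filter (fun j : Fin n => (j : ℕ) < (i : ℕ) + 1), Xv j ω)
        = Xv i ω + ∑ j ∈ Finset.univ.filter (fun j : Fin n => (j : ℕ) < (i : ℕ)), Xv j ω := by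
    intro i ω
    have hset : Finset.univ.filter (fun j : Fin n => (j : ℕ) < (i : ℕ) + 1)
        = insert i (Finset.univ.filter (fun j : Fin n => (j : ℕ) < (i : ℕ))) := by
      ext j
      simp only [Finset.mem_filter, Finset.mem_univ, true_and, Finset.mem_insert,
        Nat.lt_succ_iff_lt_or_eq]
      constructor
      · rintro (h | h)
        · exact Or.inr h
        · exact Or.inl (Fin.ext h)
      · rintro (h | h)
        · exact Or.inr (by rw [h])
        · exact Or.inl h
    rw [hset, Finset.sum_insert (by simp)]
  have hZdiff : ∀ (i : Fin n) ω, Z ((i : ℕ) + 1) ω - Z (i : ℕ) ω = Xv i ω / X ω := by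
    intro i ω
    rw [hZ, hZ, ← sub_div, hdiffnum i ω, add_sub_cancel_right]
  have hXZdiff : ∀ (i : Fin n) ω, X ω * (Z ((i : ℕ) + 1) ω - Z (i : ℕ) ω) = Xv i ω := by
    intro i ω
    rw [hZdiff]
    rcases eq_or_ne (X ω) 0 with h0 | h0
    · have hXv0 : Xv i ω = 0 := le_antisymm (h0 ▸ hXvle i ω) (hpos i ω)
      simp [h0, hXv0]
    · rw [mul_comm, div_mul_cancel₀ _ h0]
  have hZm : ∀ k, Measurable (Z k) := by
    intro k
    have h1 : Z k = fun ω =>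
        (∑ j ∈ Finset.univ.filter (fun j : Fin n => (j : ℕ) < k), Xv j ω) / X ω :=
      funext (hZ k)
    rw [h1]
    exact (Finset.measurable_sum _ fun j _ => hmeas j).div hXm
  have hAmeas : ∀ i, MeasurableSet (A i) := by
    intro i
    rw [hA]
    exact (measurableSet_le (hZm _) hUm).inter (measurableSet_lt hUm (hZm _))
  have hYm : ∀ i, Measurable (Y i) := by
    intro i
    have h1 : Y i = fun ω => X ω * (A i).indicator 1 ω := funext (hY i)
    rw [h1]
    exact hXm.mul (measurable_one.indicator (hAmeas i))
  have hYint : ∀ i, Integrable (Y i) P := by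
    intro i
    refine Integrable.mono' hXint (hYm i).aestronglyMeasurable (ae_of_all _ fun ω => ?_)
    rw [hY]
    by_cases hω : ω ∈ A i
    · rw [Set.indicator_of_mem hω, Pi.one_apply, mul_one, Real.norm_eq_abs,
        abs_of_nonneg (hX0 ω)]
    · rw [Set.indicator_of_notMem hω, mul_zero, norm_zero]
      exact hX0 ω
  -- Conjunct 2: disjoint supports
  have hzero : ∀ i j : Fin n, (i : ℕ) < (j : ℕ) → ∀ ω, Y i ω * Y j ω = 0 := by
    intro i j hij ω
    by_cases hω : ω ∈ A i
    · have hnot : ω ∉ A j := by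
        intro hω'
        rw [hA] at hω hω'
        have h1 : Z ((i : ℕ) + 1) ω ≤ Z (j : ℕ) ω := hSmono _ _ hij ω
        exact absurd (lt_of_lt_of_le hω.2 (le_trans h1 hω'.1)) (lt_irrefl _)
      rw [hY j ω, Set.indicator_of_notMem hnot, mul_zero, mul_zero]
    · rw [hY i ω, Set.indicator_of_notMem hω, mul_zero, zero_mul]
  have c2 : ∀ i j, i ≠ j → ∀ ω, Y i ω * Y j ω = 0 := by
    intro i j hij ω
    rcases Ne.lt_or_gt hij with h | h
    · exact hzero i j h ω
    · rw [mul_comm]; exact hzero j i h ω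
  -- Conjunct 1: sums to X a.e.
  have hU01 : ∀ᵐ ω ∂P, 0 ≤ U ω ∧ U ω < 1 := by
    have hms : MeasurableSet {x : ℝ | 0 ≤ x ∧ x < 1} :=
      (measurableSet_le measurable_const measurable_id).inter
        (measurableSet_lt measurable_id measurable_const)
    rw [show (∀ᵐ ω ∂P, 0 ≤ U ω ∧ U ω < 1) ↔ ∀ᵐ x ∂(P.map U), 0 ≤ x ∧ x < 1 from
      (ae_map_iff hUm.aemeasurable hms).symm, hUlaw]
    have hne : ∀ᵐ x : ℝ ∂(volume.restrict (Icc 0 1)), x ≠ 1 := by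
      refine ae_iff.mpr ?_
      have hs : MeasurableSet {x : ℝ | ¬x ≠ 1} := by
        have : {x : ℝ | ¬x ≠ 1} = {1} := by ext x; simp
        rw [this]; exact measurableSet_singleton 1
      rw [Measure.restrict_apply hs]
      have hsub : ({x : ℝ | ¬x ≠ 1} ∩ Icc 0 1) ⊆ {(1 : ℝ)} := by
        intro x hx
        have hx1 := not_not.mp hx.1
        simp [hx1]
      exact measure_mono_null hsub Real.volume_singleton
    filter_upwards [ae_restrict_mem measurableSet_Icc, hne] with x hx hx1
    exact ⟨hx.1, lt_of_le_of_ne hx.2 hx1⟩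
  have c1 : ∀ᵐ ω ∂P, ∑ i, Y i ω = X ω := by
    filter_upwards [hU01] with ω hω
    rcases eq_or_ne (X ω) 0 with h0 | h0
    · rw [h0]
      exact Finset.sum_eq_zero fun i _ => by rw [hY, h0, zero_mul]
    · have hn : 0 < n := by
        rcases Nat.eq_zero_or_pos n with h | h
        · exfalso; apply h0; rw [hX]; subst h; simp
        · exact h
      have hp : U ω < Z (n - 1 + 1) ω := by
        rw [Nat.sub_add_cancel hn, hZtop ω h0]
        exact hω.2
      have hex : ∃ m, U ω < Z (m + 1) ω := ⟨n - 1, hp⟩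
      set k := Nat.find hex with hkdef
      have hk2 : U ω < Z (k + 1) ω := Nat.find_spec hex
      have hkn : k < n := lt_of_le_of_lt (Nat.find_le hp) (Nat.sub_lt hn one_pos)
      have hk1 : Z k ω ≤ U ω := by
        rcases Nat.eq_zero_or_pos k with h | h
        · rw [h, hZzero]; exact hω.1
        · have hlt : k - 1 < k := Nat.sub_lt h one_pos
          have := Nat.find_min hex hlt
          rw [Nat.sub_add_cancel h] at this
          exact not_lt.mp this
      set i₀ : Fin n := ⟨k, hkn⟩ with hi₀
      have hmem : ω ∈ A i₀ := by
        rw [hA]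
        exact ⟨hk1, hk2⟩
      have hYi₀ : Y i₀ ω = X ω := by
        rw [hY, Set.indicator_of_mem hmem, Pi.one_apply, mul_one]
      rw [Finset.sum_eq_single i₀]
      · exact hYi₀
      · intro j _ hj
        rcases mul_eq_zero.mp (c2 j i₀ hj ω) with h | h
        · exact h
        · rw [hYi₀] at h; exact absurd h h0
      · intro h; exact absurd (Finset.mem_univ i₀) h
  -- the key integral identity, specialized
  set gk : ℕ → (Fin n → ℝ) → ℝ := fun k t =>
    (∑ j ∈ Finset.univ.filter (fun j : Fin n => (j : ℕ) < k), t j) / (∑ j, t j) with hgkdef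
  have hgkm : ∀ k, Measurable (gk k) := fun k =>
    (Finset.measurable_sum _ fun j _ => measurable_pi_apply j).div
      (Finset.measurable_sum _ fun j _ => measurable_pi_apply j)
  have hgkT : ∀ k ω, gk k (T ω) = Z k ω := by
    intro k ω
    rw [hZ, hX, hgkdef, hTdef]
  have keyi : ∀ (i : Fin n) (ψ : (Fin n → ℝ) → ℝ), Measurable ψ →
      Integrable (fun ω => if ω ∈ A i then ψ (T ω) else 0) P →
      Integrable (fun ω => ψ (T ω) * (Z ((i : ℕ) + 1) ω - Z (i : ℕ) ω)) P ∧
      ∫ ω, (if ω ∈ A i then ψ (T ω) else 0) ∂P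
        = ∫ ω, ψ (T ω) * (Z ((i : ℕ) + 1) ω - Z (i : ℕ) ω) ∂P := by
    intro i ψ hψ hIψ
    have hiff : ∀ ω, (ω ∈ A i) ↔
        (gk (i : ℕ) (T ω) ≤ U ω ∧ U ω < gk ((i : ℕ) + 1) (T ω)) := by
      intro ω
      rw [hA i]
      simp only [mem_setOf_eq, hgkT]
    have hfeq : (fun ω => if ω ∈ A i then ψ (T ω) else 0)
        = fun ω => if gk (i : ℕ) (T ω) ≤ U ω ∧ U ω < gk ((i : ℕ) + 1) (T ω)
            then ψ (T ω) else 0 :=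
      funext fun ω => if_congr (hiff ω) rfl rfl
    have hgdiff : (fun ω => ψ (T ω) * (gk ((i : ℕ) + 1) (T ω) - gk (i : ℕ) (T ω)))
        = fun ω => ψ (T ω) * (Z ((i : ℕ) + 1) ω - Z (i : ℕ) ω) :=
      funext fun ω => by rw [hgkT, hgkT]
    have hr : ∀ ω, 0 ≤ gk (i : ℕ) (T ω) ∧ gk (i : ℕ) (T ω) ≤ gk ((i : ℕ) + 1) (T ω) ∧
        gk ((i : ℕ) + 1) (T ω) ≤ 1 := by
      intro ω
      rw [hgkT, hgkT]
      exact ⟨hZnn _ _, hSmono _ _ (Nat.le_succ _) ω, hZle1 _ _⟩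
    obtain ⟨h1, h2⟩ := key_lemma P T U hT hUm hUlaw hUindep.symm
      (gk (i : ℕ)) (gk ((i : ℕ) + 1)) (hgkm _) (hgkm _) hr ψ hψ (hfeq ▸ hIψ)
    exact ⟨hgdiff ▸ h1, by rw [hfeq, h2, hgdiff]⟩
  -- Conjunct 3: conditional expectation
  have hm : MeasurableSpace.comap T MeasurableSpace.pi ≤ ‹MeasurableSpace Ω› := hT.comap_le
  have c3 : ∀ i, P[Y i | MeasurableSpace.comap T MeasurableSpace.pi] =ᵐ[P] Xv i := by
    intro i
    have hTm' : Measurable[MeasurableSpace.comap T MeasurableSpace.pi] T :=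
      fun s hs => ⟨s, hs, rfl⟩
    refine (ae_eq_condExp_of_forall_setIntegral_eq hm (hYint i)
      (fun s _ _ => (hint i).integrableOn) ?_ ?_).symm
    · intro s hs _
      obtain ⟨B, hB, rfl⟩ := hs
      set ψ : (Fin n → ℝ) → ℝ := fun t => B.indicator (fun _ => (1 : ℝ)) t * ∑ j, t j
        with hψdef
      have hψm : Measurable ψ :=
        (measurable_const.indicator hB).mul (Finset.measurable_sum _ fun j _ =>
          measurable_pi_apply j)
      have hsumT : ∀ ω, (∑ j, T ω j) = X ω := fun ω => (hX ω).symm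
      have heq1 : (fun ω => if ω ∈ A i then ψ (T ω) else 0)
          = (T ⁻¹' B).indicator (Y i) := by
        funext ω
        rw [Set.indicator_apply]
        by_cases hω : ω ∈ A i <;> by_cases hB' : T ω ∈ B
        · rw [if_pos hω, if_pos (show ω ∈ T ⁻¹' B from hB')]
          simp only [hψdef]
          rw [Set.indicator_of_mem hB', one_mul, hsumT ω, hY i ω,
            Set.indicator_of_mem hω, Pi.one_apply, mul_one]
        · rw [if_pos hω, if_neg (show ω ∉ T ⁻¹' B from hB')]
          simp only [hψdef]
          rw [Set.indicator_of_notMem hB', zero_mul]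
        · rw [if_neg hω, if_pos (show ω ∈ T ⁻¹' B from hB'), hY i ω,
            Set.indicator_of_notMem hω, mul_zero]
        · rw [if_neg hω, if_neg (show ω ∉ T ⁻¹' B from hB')]
      have hIψ : Integrable (fun ω => if ω ∈ A i then ψ (T ω) else 0) P := by
        rw [heq1]
        exact (hYint i).indicator (hT hB)
      obtain ⟨hint2, heq2⟩ := keyi i ψ hψm hIψ
      have heq3 : (fun ω => ψ (T ω) * (Z ((i : ℕ) + 1) ω - Z (i : ℕ) ω))
          = (T ⁻¹' B).indicator (Xv i) := by
        funext ω
        have h4 : ψ (T ω) * (Z ((i : ℕ) + 1) ω - Z (i : ℕ) ω)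
            = B.indicator (fun _ => (1 : ℝ)) (T ω) * Xv i ω := by
          simp only [hψdef]
          rw [hsumT ω, mul_assoc, hXZdiff i ω]
        rw [h4]
        by_cases hB' : T ω ∈ B
        · rw [Set.indicator_of_mem hB', Set.indicator_of_mem
            (show ω ∈ T ⁻¹' B from hB'), one_mul]
        · rw [Set.indicator_of_notMem hB', Set.indicator_of_notMem
            (show ω ∉ T ⁻¹' B from hB'), zero_mul]
      calc ∫ x in T ⁻¹' B, Xv i x ∂P
          = ∫ ω, (T ⁻¹' B).indicator (Xv i) ω ∂P := (integral_indicator (hT hB)).symm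
        _ = ∫ ω, ψ (T ω) * (Z ((i : ℕ) + 1) ω - Z (i : ℕ) ω) ∂P := by rw [heq3]
        _ = ∫ ω, (if ω ∈ A i then ψ (T ω) else 0) ∂P := heq2.symm
        _ = ∫ ω, (T ⁻¹' B).indicator (Y i) ω ∂P := by rw [heq1]
        _ = ∫ x in T ⁻¹' B, Y i x ∂P := integral_indicator (hT hB)
    · exact StronglyMeasurable.aestronglyMeasurable
        (Measurable.stronglyMeasurable ((measurable_pi_apply i).comp hTm'))
  -- Conjunct 4: convex order
  have c4 : ∀ i (φ : ℝ → ℝ), ConvexOn ℝ univ φ →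
      Integrable (fun ω => φ (Xv i ω)) P → Integrable (fun ω => φ (Y i ω)) P →
      ∫ ω, φ (Xv i ω) ∂P ≤ ∫ ω, φ (Y i ω) ∂P := by
    intro i φ hφ hφX hφY
    have hφc : Continuous φ := by
      rw [← continuousOn_univ]
      exact hφ.continuousOn isOpen_univ
    set ψ : (Fin n → ℝ) → ℝ := fun t => φ (∑ j, t j) - φ 0 with hψdef
    have hψm : Measurable ψ :=
      (hφc.measurable.comp (Finset.measurable_sum _ fun j _ =>
        measurable_pi_apply j)).sub measurable_const
    have hsumT : ∀ ω, (∑ j, T ω j) = X ω := fun ω => (hX ω).symm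
    have hψT : ∀ ω, ψ (T ω) = φ (X ω) - φ 0 := by
      intro ω
      simp only [hψdef]
      rw [hsumT ω]
    have heq1 : (fun ω => if ω ∈ A i then ψ (T ω) else 0)
        = (A i).indicator (fun ω => φ (Y i ω) - φ 0) := by
      funext ω
      by_cases hω : ω ∈ A i
      · rw [if_pos hω, Set.indicator_of_mem hω]
        have hYω : Y i ω = X ω := by
          rw [hY, Set.indicator_of_mem hω, Pi.one_apply, mul_one]
        rw [hYω, hψT ω]
      · rw [if_neg hω, Set.indicator_of_notMem hω]
    have hIψ : Integrable (fun ω => if ω ∈ A i then ψ (T ω) else 0) P := by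
      rw [heq1]
      exact (hφY.sub (integrable_const _)).indicator (hAmeas i)
    obtain ⟨hint2, heq2⟩ := keyi i ψ hψm hIψ
    have heqY : (fun ω => φ (Y i ω))
        = fun ω => (if ω ∈ A i then ψ (T ω) else 0) + φ 0 := by
      funext ω
      by_cases hω : ω ∈ A i
      · rw [if_pos hω]
        have hYω : Y i ω = X ω := by
          rw [hY, Set.indicator_of_mem hω, Pi.one_apply, mul_one]
        rw [hYω, hψT ω, sub_add_cancel]
      · rw [if_neg hω]
        have hYω : Y i ω = 0 := by
          rw [hY, Set.indicator_of_notMem hω, mul_zero]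
        rw [hYω, zero_add]
    have hpt : ∀ ω, φ (Xv i ω) ≤ ψ (T ω) * (Z ((i : ℕ) + 1) ω - Z (i : ℕ) ω) + φ 0 := by
      intro ω
      rw [hZdiff i ω, hψT ω]
      rcases eq_or_lt_of_le (hX0 ω) with h0 | h0
      · have hXv0 : Xv i ω = 0 := le_antisymm (h0 ▸ hXvle i ω) (hpos i ω)
        rw [hXv0, zero_div, mul_zero, zero_add]
      · set lam := Xv i ω / X ω with hlam
        have h1 : 0 ≤ lam := div_nonneg (hpos i ω) (hX0 ω)
        have h2 : lam ≤ 1 := div_le_one_of_le₀ (hXvle i ω) (hX0 ω)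
        have hc := hφ.2 (mem_univ (X ω)) (mem_univ (0 : ℝ)) h1
          (by linarith : (0 : ℝ) ≤ 1 - lam) (by ring)
        have harg : lam • X ω + (1 - lam) • (0 : ℝ) = Xv i ω := by
          rw [smul_eq_mul, smul_eq_mul, mul_zero, add_zero, hlam,
            div_mul_cancel₀ _ (ne_of_gt h0)]
        rw [harg] at hc
        simp only [smul_eq_mul] at hc
        have hring : (φ (X ω) - φ 0) * lam + φ 0 = lam * φ (X ω) + (1 - lam) * φ 0 := by
          ring
        rw [hring]
        exact hc
    calc ∫ ω, φ (Xv i ω) ∂P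
        ≤ ∫ ω, (ψ (T ω) * (Z ((i : ℕ) + 1) ω - Z (i : ℕ) ω) + φ 0) ∂P :=
          integral_mono hφX (hint2.add (integrable_const _)) hpt
      _ = ∫ ω, ψ (T ω) * (Z ((i : ℕ) + 1) ω - Z (i : ℕ) ω) ∂P + φ 0 := by
          rw [integral_add hint2 (integrable_const _), integral_const, probReal_univ,
            one_smul]
      _ = ∫ ω, (if ω ∈ A i then ψ (T ω) else 0) ∂P + φ 0 := by rw [heq2]
      _ = ∫ ω, φ (Y i ω) ∂P := by
          rw [heqY, integral_add hIψ (integrable_const _), integral_const, probReal_univ,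
            one_smul]
  exact ⟨c1, c2, c3, c4⟩
end

section
/- If X_1,...,X_n are integrable random variables all bounded below (respectively, all bounded above), X = ∑ X_i, and there exists a uniform random variable independent of (X_1,...,X_n), then there exists a counter-monotonic allocation (Y_1,...,Y_n) with ∑ Y_i = X and X_i ≤_cx Y_i for every i. (Proof via shifting: choose constants m_i with X_i + m_i ≥ 0, apply the counter-monotonic improvement theorem to the shifted variables, and shift back, using invariance of convex order under constant shifts.) -/
open MeasureTheory Set ProbabilityTheory

namespace Stmt4Aux

noncomputable def nu : Measure ℝ := (volume : Measure ℝ).restrict (Icc 0 1)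

instance : IsProbabilityMeasure nu := by
  constructor
  rw [nu, Measure.restrict_apply_univ, Real.volume_Icc]
  norm_num

variable {n : ℕ}

def tot (x : Fin n → ℝ) : ℝ := ∑ j, x j

def psum (i : Fin n) (x : Fin n → ℝ) : ℝ := ∑ j ∈ Finset.univ.filter (fun j => j < i), x j

noncomputable def g (i : Fin n) (p : ℝ × (Fin n → ℝ)) : ℝ :=
  if psum i p.2 ≤ p.1 * tot p.2 ∧ p.1 * tot p.2 < psum i p.2 + p.2 i then tot p.2 else 0

lemma measurable_tot : Measurable (tot (n := n)) :=
  Finset.measurable_sum _ fun j _ => measurable_pi_apply j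

lemma measurable_psum (i : Fin n) : Measurable (psum i) :=
  Finset.measurable_sum _ fun j _ => measurable_pi_apply j

lemma measurable_g (i : Fin n) : Measurable (g i) := by
  have h1 : Measurable fun p : ℝ × (Fin n → ℝ) => psum i p.2 := (measurable_psum i).comp measurable_snd
  have h2 : Measurable fun p : ℝ × (Fin n → ℝ) => p.1 * tot p.2 :=
    measurable_fst.mul (measurable_tot.comp measurable_snd)
  have h3 : Measurable fun p : ℝ × (Fin n → ℝ) => psum i p.2 + p.2 i :=
    h1.add ((measurable_pi_apply i).comp measurable_snd)
  exact Measurable.ite ((measurableSet_le h1 h2).inter (measurableSet_lt h2 h3))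
    (measurable_tot.comp measurable_snd) measurable_const

lemma psum_nonneg {x : Fin n → ℝ} (hx : ∀ j, 0 ≤ x j) (i : Fin n) : 0 ≤ psum i x :=
  Finset.sum_nonneg fun j _ => hx j

lemma tot_nonneg {x : Fin n → ℝ} (hx : ∀ j, 0 ≤ x j) : 0 ≤ tot x :=
  Finset.sum_nonneg fun j _ => hx j

lemma psum_add_le {x : Fin n → ℝ} (hx : ∀ j, 0 ≤ x j) {i k : Fin n} (hik : i < k) :
    psum i x + x i ≤ psum k x := by
  have hnotmem : i ∉ Finset.univ.filter (fun j => j < i) := by simp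
  have : psum i x + x i = ∑ j ∈ insert i (Finset.univ.filter (fun j => j < i)), x j := by
    rw [Finset.sum_insert hnotmem, psum]; ring
  rw [this, psum]
  apply Finset.sum_le_sum_of_subset_of_nonneg
  · intro j hj
    simp only [Finset.mem_insert, Finset.mem_filter, Finset.mem_univ, true_and] at hj ⊢
    rcases hj with rfl | hj
    · exact hik
    · exact hj.trans hik
  · exact fun j _ _ => hx j

lemma psum_add_le_tot {x : Fin n → ℝ} (hx : ∀ j, 0 ≤ x j) (i : Fin n) :
    psum i x + x i ≤ tot x := by
  have hnotmem : i ∉ Finset.univ.filter (fun j => j < i) := by simp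
  have : psum i x + x i = ∑ j ∈ insert i (Finset.univ.filter (fun j => j < i)), x j := by
    rw [Finset.sum_insert hnotmem, psum]; ring
  rw [this, tot]
  exact Finset.sum_le_sum_of_subset_of_nonneg (fun j _ => Finset.mem_univ j) fun j _ _ => hx j

lemma g_nonneg {x : Fin n → ℝ} (hx : ∀ j, 0 ≤ x j) (i : Fin n) (u : ℝ) :
    0 ≤ g i (u, x) := by
  rw [g]
  split
  · exact tot_nonneg hx
  · exact le_refl 0

lemma not_both {x : Fin n → ℝ} (hx : ∀ j, 0 ≤ x j) {i k : Fin n} (hik : i < k) {t : ℝ}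
    (h1 : psum i x ≤ t ∧ t < psum i x + x i) (h2 : psum k x ≤ t ∧ t < psum k x + x k) :
    False := by
  have := psum_add_le hx hik
  linarith [h1.2, h2.1]

lemma g_mul_eq_zero {x : Fin n → ℝ} (hx : ∀ j, 0 ≤ x j) {i k : Fin n} (hik : i ≠ k) (u : ℝ) :
    g i (u, x) * g k (u, x) = 0 := by
  rw [g, g]
  split
  · rename_i h1
    split
    · rename_i h2
      exfalso
      rcases lt_or_gt_of_ne hik with h | h
      · exact not_both hx h h1 h2
      · exact not_both hx h h2 h1
    · ring
  · ring

lemma psum_succ {x : Fin n → ℝ} (i : Fin n) (h : i.val + 1 < n) :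
    psum ⟨i.val + 1, h⟩ x = psum i x + x i := by
  have hset : Finset.univ.filter (fun j => j < (⟨i.val + 1, h⟩ : Fin n))
      = insert i (Finset.univ.filter (fun j => j < i)) := by
    ext j
    simp only [Finset.mem_filter, Finset.mem_univ, true_and, Finset.mem_insert, Fin.lt_def,
      Fin.ext_iff]
    omega
  rw [psum, hset, Finset.sum_insert (by simp), psum]; ring

lemma psum_add_eq_tot {x : Fin n → ℝ} (i : Fin n) (h : ¬ (i.val + 1 < n)) :
    psum i x + x i = tot x := by
  have hset : insert i (Finset.univ.filter (fun j => j < i)) = Finset.univ := by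
    ext j
    have hj := j.isLt
    simp only [Finset.mem_insert, Finset.mem_filter, Finset.mem_univ, true_and, iff_true,
      Fin.lt_def, Fin.ext_iff]
    omega
  rw [tot, ← hset, Finset.sum_insert (by simp), psum]; ring

lemma exists_cond {x : Fin n → ℝ} {t : ℝ} (h0 : 0 ≤ t) (ht : t < tot x) :
    ∃ i, psum i x ≤ t ∧ t < psum i x + x i := by
  have hn : 0 < n := by
    rcases Nat.eq_zero_or_pos n with h | h
    · subst h; rw [tot] at ht; simp at ht; linarith
    · exact h
  set S := Finset.univ.filter (fun i : Fin n => psum i x ≤ t) with hS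
  have hzero : psum (⟨0, hn⟩ : Fin n) x = 0 :=
    Finset.sum_eq_zero fun j hj => absurd (Finset.mem_filter.mp hj).2 (by simp [Fin.lt_def])
  have hne : S.Nonempty := ⟨⟨0, hn⟩, Finset.mem_filter.mpr ⟨Finset.mem_univ _, by rw [hzero]; exact h0⟩⟩
  set i₀ := S.max' hne with hi₀
  have h1 : psum i₀ x ≤ t := (Finset.mem_filter.mp (S.max'_mem hne)).2
  refine ⟨i₀, h1, ?_⟩
  by_contra hle
  push_neg at hle
  by_cases hsucc : i₀.val + 1 < n
  · have hk : (⟨i₀.val + 1, hsucc⟩ : Fin n) ∈ S :=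
      Finset.mem_filter.mpr ⟨Finset.mem_univ _, by rw [psum_succ]; exact hle⟩
    have hle2 := S.le_max' _ hk
    rw [← hi₀, Fin.le_def] at hle2
    simp at hle2
  · rw [psum_add_eq_tot i₀ hsucc] at hle; linarith

lemma sum_g {x : Fin n → ℝ} (hx : ∀ j, 0 ≤ x j) {u : ℝ} (hu : u ∈ Ico (0:ℝ) 1) :
    ∑ i, g i (u, x) = tot x := by
  rcases eq_or_lt_of_le (tot_nonneg hx) with h | h
  · have hz : ∀ i, g i (u, x) = 0 := by
      intro i; rw [g]; split
      · exact h.symm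
      · rfl
    rw [Finset.sum_congr rfl fun i _ => hz i, Finset.sum_const, smul_zero, h]
  · have h0t : (0:ℝ) ≤ u * tot x := mul_nonneg hu.1 h.le
    have htt : u * tot x < tot x := by nlinarith [hu.2]
    obtain ⟨i₀, hc⟩ := exists_cond h0t htt
    rw [Finset.sum_eq_single_of_mem i₀ (Finset.mem_univ _) ?_]
    · rw [g, if_pos hc]
    · intro k _ hki
      rw [g, if_neg]
      intro hck
      rcases lt_or_gt_of_ne hki with hlt | hlt
      · exact not_both hx hlt hck hc
      · exact not_both hx hlt hc hck

lemma integral_g_ge {x : Fin n → ℝ} (hx : ∀ j, 0 ≤ x j) (i : Fin n)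
    {φ : ℝ → ℝ} (hφ : ConvexOn ℝ univ φ) :
    φ (x i) ≤ ∫ u, φ (g i (u, x)) ∂nu := by
  rcases eq_or_lt_of_le (tot_nonneg hx) with h | hs
  · have hxi : x i = 0 := by
      have h1 := psum_add_le_tot hx i
      have h2 := psum_nonneg hx i
      have h3 := hx i
      linarith [h.symm ▸ h1]
    have hz : ∀ u : ℝ, φ (g i (u, x)) = φ 0 := by
      intro u; rw [g]; split
      · rw [← h]
      · rfl
    have heq : ∫ u, φ (g i (u, x)) ∂nu = φ 0 := by simp_rw [hz]; simp [measure_univ]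
    rw [hxi, heq]
  · set s := tot x with hsdef
    set a := psum i x / s with ha
    set b := (psum i x + x i) / s with hb
    have hps0 := psum_nonneg hx i
    have hpst := psum_add_le_tot hx i
    have ha0 : 0 ≤ a := div_nonneg hps0 hs.le
    have hb1 : b ≤ 1 := (div_le_one hs).mpr hpst
    have hba : b - a = x i / s := by rw [ha, hb, div_sub_div_same]; ring_nf
    have hset : ∀ u : ℝ, (psum i x ≤ u * s ∧ u * s < psum i x + x i) ↔ u ∈ Ico a b := by
      intro u
      rw [mem_Ico, ha, hb, div_le_iff₀ hs, lt_div_iff₀ hs]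
    have hfun : (fun u : ℝ => φ (g i (u, x)))
        = fun u => (Ico a b).indicator (fun _ => φ s - φ 0) u + φ 0 := by
      funext u
      by_cases hmem : u ∈ Ico a b
      · rw [g, if_pos ((hset u).mpr hmem), indicator_of_mem hmem]; ring_nf; rfl
      · rw [g, if_neg (fun hc => hmem ((hset u).mp hc)), indicator_of_notMem hmem]; ring
    have hnuI : nu (Ico a b) = ENNReal.ofReal (b - a) := by
      rw [nu, Measure.restrict_apply measurableSet_Ico]
      have : Ico a b ∩ Icc 0 1 = Ico a b := by
        apply inter_eq_left.mpr
        intro u hu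
        exact ⟨le_trans ha0 hu.1, le_trans hu.2.le hb1⟩
      rw [this, Real.volume_Ico]
    have hint : ∫ u, φ (g i (u, x)) ∂nu = (b - a) * (φ s - φ 0) + φ 0 := by
      rw [hfun, integral_add ((integrable_const _).indicator measurableSet_Ico)
        (integrable_const _), integral_indicator_const _ measurableSet_Ico, integral_const,
        measureReal_def, hnuI, ENNReal.toReal_ofReal (by rw [hba]; exact div_nonneg (hx i) hs.le)]
      simp [measure_univ, smul_eq_mul]
    rw [hint, hba]
    set t := x i / s with htdef
    have ht0 : 0 ≤ t := div_nonneg (hx i) hs.le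
    have ht1 : t ≤ 1 := (div_le_one hs).mpr (by linarith)
    have hc := hφ.2 (mem_univ s) (mem_univ 0) ht0 (by linarith : (0:ℝ) ≤ 1 - t) (by ring)
    simp only [smul_eq_mul, mul_zero, add_zero] at hc
    rw [div_mul_cancel₀ _ hs.ne'] at hc
    linarith
lemma measurableSet_nonneg : MeasurableSet {x : Fin n → ℝ | ∀ j, 0 ≤ x j} := by
  have : {x : Fin n → ℝ | ∀ j, 0 ≤ x j} = ⋂ j, {x | 0 ≤ x j} := by ext; simp
  rw [this]
  exact MeasurableSet.iInter fun j => measurableSet_le measurable_const (measurable_pi_apply j)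

theorem key {Ω : Type*} [MeasurableSpace Ω] (P : Measure Ω) [IsProbabilityMeasure P]
    (Xv : Fin n → Ω → ℝ) (hmeas : ∀ i, Measurable (Xv i))
    (hpos : ∀ i ω, 0 ≤ Xv i ω)
    (U : Ω → ℝ) (hUm : Measurable U)
    (hUlaw : P.map U = (volume : Measure ℝ).restrict (Icc 0 1))
    (hUindep : IndepFun U (fun ω (i : Fin n) => Xv i ω) P) :
    ∃ Y : Fin n → Ω → ℝ,
      (∀ i, AEMeasurable (Y i) P) ∧
      (∀ i j, i ≠ j → ∀ᵐ p ∂(P.prod P),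
        (Y i p.1 - Y i p.2) * (Y j p.1 - Y j p.2) ≤ 0) ∧
      (∀ᵐ ω ∂P, ∑ i, Y i ω = ∑ i, Xv i ω) ∧
      (∀ i (φ : ℝ → ℝ), ConvexOn ℝ univ φ →
        Integrable (fun ω => φ (Xv i ω)) P → Integrable (fun ω => φ (Y i ω)) P →
        ∫ ω, φ (Xv i ω) ∂P ≤ ∫ ω, φ (Y i ω) ∂P) := by
  set X : Ω → (Fin n → ℝ) := fun ω i => Xv i ω with hX
  have hXm : Measurable X := measurable_pi_lambda _ hmeas
  set μ := P.map X with hμ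
  haveI : IsProbabilityMeasure μ := Measure.isProbabilityMeasure_map hXm.aemeasurable
  have hjoint : P.map (fun ω => (U ω, X ω)) = nu.prod μ := by
    have h := (indepFun_iff_map_prod_eq_prod_map_map hUm.aemeasurable hXm.aemeasurable).mp hUindep
    rw [h, hUlaw]
    rfl
  refine ⟨fun i ω => g i (U ω, X ω), ?_, ?_, ?_, ?_⟩
  · exact fun i => ((measurable_g i).comp (hUm.prodMk hXm)).aemeasurable
  · intro i j hij
    apply ae_of_all
    rintro ⟨ω, ω'⟩
    simp only
    have h1 := g_mul_eq_zero (x := X ω) (fun k => hpos k ω) hij (U ω)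
    have h2 := g_mul_eq_zero (x := X ω') (fun k => hpos k ω') hij (U ω')
    have h3 := g_nonneg (fun k => hpos k ω) i (U ω)
    have h4 := g_nonneg (fun k => hpos k ω') i (U ω')
    have h5 := g_nonneg (fun k => hpos k ω) j (U ω)
    have h6 := g_nonneg (fun k => hpos k ω') j (U ω')
    nlinarith [mul_nonneg h3 h6, mul_nonneg h4 h5]
  · have hU01 : ∀ᵐ ω ∂P, U ω ∈ Ico (0:ℝ) 1 := by
      refine (ae_map_iff hUm.aemeasurable measurableSet_Ico).mp ?_
      rw [hUlaw, ae_restrict_iff' measurableSet_Icc]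
      have h1 : ∀ᵐ u : ℝ ∂volume, u ≠ 1 := by
        refine ae_iff.mpr ?_
        simp only [ne_eq, not_not, setOf_eq_eq_singleton]
        exact Real.volume_singleton
      filter_upwards [h1] with u hu hmem
      exact ⟨hmem.1, lt_of_le_of_ne hmem.2 hu⟩
    filter_upwards [hU01] with ω hω
    simpa [tot] using sum_g (fun k => hpos k ω) hω
  · intro i φ hφ hIX hIY
    have hφc : Continuous φ := by
      rw [← continuousOn_univ]; exact hφ.continuousOn isOpen_univ
    have hφgm : Measurable fun p : ℝ × (Fin n → ℝ) => φ (g i p) :=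
      hφc.measurable.comp (measurable_g i)
    have hWm : Measurable fun ω => (U ω, X ω) := hUm.prodMk hXm
    have e1 : ∫ ω, φ (g i (U ω, X ω)) ∂P = ∫ p, φ (g i p) ∂(nu.prod μ) := by
      rw [← hjoint, integral_map hWm.aemeasurable hφgm.aestronglyMeasurable]
    have hI2 : Integrable (fun p => φ (g i p)) (nu.prod μ) := by
      rw [← hjoint]
      exact (integrable_map_measure hφgm.aestronglyMeasurable hWm.aemeasurable).mpr hIY
    have e2 : ∫ p, φ (g i p) ∂(nu.prod μ) = ∫ x, ∫ u, φ (g i (u, x)) ∂nu ∂μ :=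
      integral_prod_symm _ hI2
    have e3 : ∫ ω, φ (Xv i ω) ∂P = ∫ x, φ (x i) ∂μ := by
      rw [hμ]
      exact (integral_map hXm.aemeasurable
        ((hφc.measurable.comp (measurable_pi_apply i)).aestronglyMeasurable)).symm
    have int1 : Integrable (fun x : Fin n → ℝ => φ (x i)) μ := by
      rw [hμ]
      exact (integrable_map_measure
        ((hφc.measurable.comp (measurable_pi_apply i)).aestronglyMeasurable)
        hXm.aemeasurable).mpr hIX
    have int2 : Integrable (fun x => ∫ u, φ (g i (u, x)) ∂nu) μ := hI2.integral_prod_right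
    have hnn : ∀ᵐ x ∂μ, ∀ j, 0 ≤ x j := by
      rw [hμ, ae_map_iff hXm.aemeasurable measurableSet_nonneg]
      exact ae_of_all _ fun ω j => hpos j ω
    have hmono : ∫ x, φ (x i) ∂μ ≤ ∫ x, ∫ u, φ (g i (u, x)) ∂nu ∂μ :=
      integral_mono_ae int1 int2 (hnn.mono fun x hx => integral_g_ge hx i hφ)
    calc ∫ ω, φ (Xv i ω) ∂P = ∫ x, φ (x i) ∂μ := e3
    _ ≤ ∫ x, ∫ u, φ (g i (u, x)) ∂nu ∂μ := hmono
    _ = ∫ ω, φ (g i (U ω, X ω)) ∂P := by rw [e1, e2]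
lemma convexOn_comp_add {φ : ℝ → ℝ} (hφ : ConvexOn ℝ univ φ) (c : ℝ) :
    ConvexOn ℝ univ fun t => φ (t + c) := by
  refine ⟨convex_univ, fun x _ y _ a b ha hb hab => ?_⟩
  have h := hφ.2 (mem_univ (x + c)) (mem_univ (y + c)) ha hb hab
  simp only [smul_eq_mul] at h ⊢
  have he : a * (x + c) + b * (y + c) = a * x + b * y + c := by linear_combination c * hab
  rw [he] at h
  linarith

lemma convexOn_comp_sub {φ : ℝ → ℝ} (hφ : ConvexOn ℝ univ φ) (c : ℝ) :
    ConvexOn ℝ univ fun t => φ (c - t) := by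
  refine ⟨convex_univ, fun x _ y _ a b ha hb hab => ?_⟩
  have h := hφ.2 (mem_univ (c - x)) (mem_univ (c - y)) ha hb hab
  simp only [smul_eq_mul] at h ⊢
  have he : a * (c - x) + b * (c - y) = c - (a * x + b * y) := by linear_combination c * hab
  rw [he] at h
  linarith

end Stmt4Aux

open Stmt4Aux

/-- Counter-monotonic improvement for variables all bounded below (or all bounded above):
there is a counter-monotonic allocation `(Y_1,...,Y_n)` with the same sum and
`X_i ≤_cx Y_i` for every `i`. -/
theorem stmt4 {Ω : Type*} [MeasurableSpace Ω] (P : Measure Ω) [IsProbabilityMeasure P]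
    {n : ℕ} (Xv : Fin n → Ω → ℝ) (hmeas : ∀ i, Measurable (Xv i))
    (hint : ∀ i, Integrable (Xv i) P)
    (hbdd : (∃ c, ∀ i ω, c ≤ Xv i ω) ∨ (∃ c, ∀ i ω, Xv i ω ≤ c))
    (U : Ω → ℝ) (hUm : Measurable U)
    (hUlaw : P.map U = (volume : Measure ℝ).restrict (Icc 0 1))
    (hUindep : IndepFun U (fun ω (i : Fin n) => Xv i ω) P) :
    ∃ Y : Fin n → Ω → ℝ,
      (∀ i, AEMeasurable (Y i) P) ∧
      (∀ i j, i ≠ j → ∀ᵐ p ∂(P.prod P),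
        (Y i p.1 - Y i p.2) * (Y j p.1 - Y j p.2) ≤ 0) ∧
      (∀ᵐ ω ∂P, ∑ i, Y i ω = ∑ i, Xv i ω) ∧
      (∀ i (φ : ℝ → ℝ), ConvexOn ℝ univ φ →
        Integrable (fun ω => φ (Xv i ω)) P → Integrable (fun ω => φ (Y i ω)) P →
        ∫ ω, φ (Xv i ω) ∂P ≤ ∫ ω, φ (Y i ω) ∂P) := by
  rcases hbdd with ⟨c, hc⟩ | ⟨c, hc⟩
  · -- bounded below: shift up by -c
    set X' : Fin n → Ω → ℝ := fun i ω => Xv i ω - c with hX'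
    have hmeas' : ∀ i, Measurable (X' i) := fun i => (hmeas i).sub measurable_const
    have hpos' : ∀ i ω, 0 ≤ X' i ω := fun i ω => sub_nonneg.mpr (hc i ω)
    have hg' : Measurable fun v : Fin n → ℝ => fun i => v i - c :=
      measurable_pi_lambda _ fun i => (measurable_pi_apply i).sub measurable_const
    have hindep' : IndepFun U (fun ω (i : Fin n) => X' i ω) P :=
      hUindep.comp measurable_id hg'
    obtain ⟨Y', hYm, hYcm, hYsum, hYcx⟩ := key P X' hmeas' hpos' U hUm hUlaw hindep'
    refine ⟨fun i ω => Y' i ω + c, fun i => (hYm i).add aemeasurable_const, ?_, ?_, ?_⟩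
    · intro i j hij
      filter_upwards [hYcm i j hij] with p hp
      have he : (Y' i p.1 + c - (Y' i p.2 + c)) * (Y' j p.1 + c - (Y' j p.2 + c))
          = (Y' i p.1 - Y' i p.2) * (Y' j p.1 - Y' j p.2) := by ring
      rw [he]
      exact hp
    · filter_upwards [hYsum] with ω hω
      have hω' : ∑ i, Y' i ω = ∑ i, (Xv i ω - c) := hω
      rw [Finset.sum_add_distrib, hω', ← Finset.sum_add_distrib]
      simp
    · intro i φ hφ hIX hIY
      have hψc := convexOn_comp_add hφ c
      have hXeq : (fun ω => φ (X' i ω + c)) = fun ω => φ (Xv i ω) := by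
        funext ω; rw [hX']; simp
      have h := hYcx i (fun t => φ (t + c)) hψc (by rw [hXeq]; exact hIX) hIY
      rw [hXeq] at h
      exact h
  · -- bounded above: reflect
    set X' : Fin n → Ω → ℝ := fun i ω => c - Xv i ω with hX'
    have hmeas' : ∀ i, Measurable (X' i) := fun i => measurable_const.sub (hmeas i)
    have hpos' : ∀ i ω, 0 ≤ X' i ω := fun i ω => sub_nonneg.mpr (hc i ω)
    have hg' : Measurable fun v : Fin n → ℝ => fun i => c - v i :=
      measurable_pi_lambda _ fun i => measurable_const.sub (measurable_pi_apply i)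
    have hindep' : IndepFun U (fun ω (i : Fin n) => X' i ω) P :=
      hUindep.comp measurable_id hg'
    obtain ⟨Y', hYm, hYcm, hYsum, hYcx⟩ := key P X' hmeas' hpos' U hUm hUlaw hindep'
    refine ⟨fun i ω => c - Y' i ω, fun i => aemeasurable_const.sub (hYm i), ?_, ?_, ?_⟩
    · intro i j hij
      filter_upwards [hYcm i j hij] with p hp
      have he : (c - Y' i p.1 - (c - Y' i p.2)) * (c - Y' j p.1 - (c - Y' j p.2))
          = (Y' i p.1 - Y' i p.2) * (Y' j p.1 - Y' j p.2) := by ring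
      rw [he]
      exact hp
    · filter_upwards [hYsum] with ω hω
      have hω' : ∑ i, Y' i ω = ∑ i, (c - Xv i ω) := hω
      rw [Finset.sum_sub_distrib, hω', Finset.sum_sub_distrib]
      ring
    · intro i φ hφ hIX hIY
      have hψc := convexOn_comp_sub hφ c
      have hXeq : (fun ω => φ (c - X' i ω)) = fun ω => φ (Xv i ω) := by
        funext ω; rw [hX']; simp
      have h := hYcx i (fun t => φ (c - t)) hψc (by rw [hXeq]; exact hIX) hIY
      rw [hXeq] at h
      exact h
end

section
/- Pareto optimality of jackpot allocations for constant total payoff: Suppose X = x > 0 is constant, each of n agents is an EU maximizer with strictly increasing continuous strictly convex utility u_i: ℝ₊ → ℝ₊, u_i(0) = 0, and there is a uniform random variable independent of X. Then every jackpot allocation of x (i.e., (x·1_{A_1},...,x·1_{A_n}) for a partition (A_1,...,A_n)) is Pareto optimal among all allocations of x into nonnegative bounded random variables. -/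
open MeasureTheory Set

/-- Pareto optimality of jackpot allocations for a constant total payoff `x > 0` shared
among `n` strictly risk-seeking EU agents, given external randomization (a uniform
random variable on the space). -/
theorem stmt8 {Ω : Type*} [MeasurableSpace Ω] (P : Measure Ω) [IsProbabilityMeasure P]
    {n : ℕ} (u : Fin n → ℝ → ℝ)
    (hu_mono : ∀ i, StrictMonoOn (u i) (Ici 0))
    (hu_cont : ∀ i, ContinuousOn (u i) (Ici 0))
    (hu_conv : ∀ i, StrictConvexOn ℝ (Ici 0) (u i))
    (hu0 : ∀ i, u i 0 = 0) (hu_nonneg : ∀ i x, 0 ≤ x → 0 ≤ u i x)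
    (x : ℝ) (hx : 0 < x)
    (U : Ω → ℝ) (hUm : Measurable U)
    (hUlaw : P.map U = (volume : Measure ℝ).restrict (Icc 0 1))
    (A : Fin n → Set Ω) (hAm : ∀ i, MeasurableSet (A i))
    (hApart : Pairwise (Function.onFun Disjoint A)) (hAunion : (⋃ i, A i) = univ) :
    ∀ Z : Fin n → Ω → ℝ, (∀ i, AEMeasurable (Z i) P) →
      (∀ i, ∀ᵐ ω ∂P, 0 ≤ Z i ω) → (∀ᵐ ω ∂P, ∑ i, Z i ω = x) →
      ¬((∀ i, ∫ ω, u i (x * (A i).indicator 1 ω) ∂P ≤ ∫ ω, u i (Z i ω) ∂P) ∧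
        ∃ j, ∫ ω, u j (x * (A j).indicator 1 ω) ∂P < ∫ ω, u j (Z j ω) ∂P) := by
  intro Z hZm hZnn hZsum
  rintro ⟨hle, j, hlt⟩
  -- u i x > 0
  have hux : ∀ i, 0 < u i x := by
    intro i
    have := hu_mono i (self_mem_Ici) (le_of_lt hx) hx
    rwa [hu0 i] at this
  -- Z i ≤ x a.e.
  have hZub : ∀ i, ∀ᵐ ω ∂P, Z i ω ≤ x := by
    intro i
    filter_upwards [hZsum, ae_all_iff.2 hZnn] with ω h1 h2
    calc Z i ω ≤ ∑ k, Z k ω :=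
          Finset.single_le_sum (fun k _ => h2 k) (Finset.mem_univ i)
      _ = x := h1
  -- integrability of Z i
  have hZint : ∀ i, Integrable (Z i) P := by
    intro i
    refine Integrable.mono' (integrable_const x) (hZm i).aestronglyMeasurable ?_
    filter_upwards [hZnn i, hZub i] with ω h1 h2
    rw [Real.norm_eq_abs, abs_of_nonneg h1]; exact h2
  -- convexity bound: u i z ≤ (u i x / x) * z for 0 ≤ z ≤ x
  have hconv : ∀ i z, 0 ≤ z → z ≤ x → u i z ≤ (u i x / x) * z := by
    intro i z hz0 hzx
    have ht0 : (0:ℝ) ≤ z / x := div_nonneg hz0 hx.le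
    have ht1 : z / x ≤ 1 := (div_le_one hx).2 hzx
    have := (hu_conv i).convexOn.2 (self_mem_Ici) (mem_Ici.2 hx.le)
      (by linarith : (0:ℝ) ≤ 1 - z / x) ht0 (by ring)
    simp only [smul_eq_mul, mul_zero, zero_add, hu0 i] at this
    have harg : z / x * x = z := div_mul_cancel₀ z (ne_of_gt hx)
    rw [harg] at this
    calc u i z ≤ z / x * u i x := this
      _ = (u i x / x) * z := by ring
  -- value of jackpot integral
  have hjack : ∀ i, ∫ ω, u i (x * (A i).indicator 1 ω) ∂P = u i x * (P (A i)).toReal := by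
    intro i
    have heq : (fun ω => u i (x * (A i).indicator 1 ω))
        = (A i).indicator (fun _ => u i x) := by
      funext ω
      by_cases h : ω ∈ A i <;> simp [indicator, h, hu0 i]
    rw [heq, integral_indicator_const _ (hAm i), smul_eq_mul, mul_comm, measureReal_def]
  -- probabilities sum to 1
  have hPsum : ∑ i, (P (A i)).toReal = 1 := by
    have h1 : P (⋃ i, A i) = ∑' i, P (A i) := measure_iUnion hApart hAm
    rw [hAunion, measure_univ, tsum_fintype] at h1
    have h2 : (∑ i, P (A i)).toReal = (1 : ENNReal).toReal := by rw [← h1]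
    rw [ENNReal.toReal_sum (fun i _ => measure_ne_top P (A i))] at h2
    simpa using h2
  -- expectations sum to x
  have hEsum : ∑ i, ∫ ω, Z i ω ∂P = x := by
    rw [← integral_finset_sum _ (fun i _ => hZint i)]
    rw [integral_congr_ae hZsum, integral_const, probReal_univ]
    simp
  -- key inequality per agent
  have hkey : ∀ i, u i x * (P (A i)).toReal ≤ (u i x / x) * ∫ ω, Z i ω ∂P := by
    intro i
    rw [← hjack i]
    refine le_trans (hle i) ?_
    have hmono : ∫ ω, u i (Z i ω) ∂P ≤ ∫ ω, (u i x / x) * Z i ω ∂P := by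
      refine integral_mono_of_nonneg ?_ ((hZint i).const_mul _) ?_
      · filter_upwards [hZnn i] with ω h using hu_nonneg i _ h
      · filter_upwards [hZnn i, hZub i] with ω h1 h2 using hconv i _ h1 h2
    rw [integral_const_mul] at hmono
    exact hmono
  -- deduce x * P(A i) ≤ ∫ Z i, strict at j
  have hcancel : ∀ i, u i x * (P (A i)).toReal ≤ (u i x / x) * ∫ ω, Z i ω ∂P →
      x * (P (A i)).toReal ≤ ∫ ω, Z i ω ∂P := by
    intro i h
    have h2 : u i x * (x * (P (A i)).toReal) ≤ u i x * ∫ ω, Z i ω ∂P := by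
      have := mul_le_mul_of_nonneg_left h hx.le
      calc u i x * (x * (P (A i)).toReal) = x * (u i x * (P (A i)).toReal) := by ring
        _ ≤ x * ((u i x / x) * ∫ ω, Z i ω ∂P) := this
        _ = u i x * ∫ ω, Z i ω ∂P := by field_simp
    exact le_of_mul_le_mul_left h2 (hux i)
  have hwk : ∀ i, x * (P (A i)).toReal ≤ ∫ ω, Z i ω ∂P :=
    fun i => hcancel i (hkey i)
  have hst : x * (P (A j)).toReal < ∫ ω, Z j ω ∂P := by
    have hkeyj : u j x * (P (A j)).toReal < (u j x / x) * ∫ ω, Z j ω ∂P := by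
      rw [← hjack j]
      refine lt_of_lt_of_le hlt ?_
      have hmono : ∫ ω, u j (Z j ω) ∂P ≤ ∫ ω, (u j x / x) * Z j ω ∂P := by
        refine integral_mono_of_nonneg ?_ ((hZint j).const_mul _) ?_
        · filter_upwards [hZnn j] with ω h using hu_nonneg j _ h
        · filter_upwards [hZnn j, hZub j] with ω h1 h2 using hconv j _ h1 h2
      rw [integral_const_mul] at hmono
      exact hmono
    have h2 : u j x * (x * (P (A j)).toReal) < u j x * ∫ ω, Z j ω ∂P := by
      have := mul_lt_mul_of_pos_left hkeyj hx
      calc u j x * (x * (P (A j)).toReal) = x * (u j x * (P (A j)).toReal) := by ring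
        _ < x * ((u j x / x) * ∫ ω, Z j ω ∂P) := this
        _ = u j x * ∫ ω, Z j ω ∂P := by field_simp
    exact lt_of_mul_lt_mul_left h2 (hux j).le
  -- contradiction by summing
  have hsum : ∑ i, x * (P (A i)).toReal < ∑ i, ∫ ω, Z i ω ∂P :=
    Finset.sum_lt_sum (fun i _ => hwk i) ⟨j, Finset.mem_univ j, hst⟩
  rw [← Finset.mul_sum, hPsum, mul_one, hEsum] at hsum
  exact lt_irrefl x hsum
end

section
/- Simplex structure of the utility possibility frontier for homogeneous risk-seeking EU agents: Let u: ℝ₊ → ℝ₊ be strictly increasing, continuous, strictly convex with u(0) = 0, let X be a nonnegative bounded random variable with P(X > 0) > 0, and assume there exists a uniform random variable independent of X. Then the set of utility vectors (E[u(X·1_{A_1})],...,E[u(X·1_{A_n})]) over all partitions (A_1,...,A_n) of Ω equals the scaled simplex Δ_n(E[u(X)]) = {θ·E[u(X)] : θ ∈ Δ_n}. -/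
open MeasureTheory Set ProbabilityTheory

/-- Simplex structure of the utility possibility frontier for homogeneous risk-seeking EU
agents: the set of utility vectors of jackpot allocations of `X` equals the scaled simplex
`Δ_n(E[u(X)])`. -/
theorem stmt9 {Ω : Type*} [MeasurableSpace Ω] (P : Measure Ω) [IsProbabilityMeasure P]
    (u : ℝ → ℝ) (hu_mono : StrictMonoOn u (Ici 0)) (hu_cont : ContinuousOn u (Ici 0))
    (hu_conv : StrictConvexOn ℝ (Ici 0) u) (hu0 : u 0 = 0)
    (hu_nonneg : ∀ x, 0 ≤ x → 0 ≤ u x)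
    (X : Ω → ℝ) (hXm : Measurable X) (hX0 : ∀ ω, 0 ≤ X ω) (M : ℝ) (hXb : ∀ ω, X ω ≤ M)
    (hXpos : 0 < P {ω | 0 < X ω})
    {n : ℕ} (hn : 0 < n)
    (U : Ω → ℝ) (hUm : Measurable U)
    (hUlaw : P.map U = (volume : Measure ℝ).restrict (Icc 0 1))
    (hUindep : IndepFun U X P) :
    {v : Fin n → ℝ | ∃ A : Fin n → Set Ω, (∀ i, MeasurableSet (A i)) ∧
        Pairwise (Function.onFun Disjoint A) ∧ (⋃ i, A i) = univ ∧
        v = fun i => ∫ ω, u (X ω * (A i).indicator 1 ω) ∂P}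
      = {v : Fin n → ℝ | ∃ θ : Fin n → ℝ, (∀ i, 0 ≤ θ i) ∧ (∑ i, θ i = 1) ∧
        v = fun i => θ i * ∫ ω, u (X ω) ∂P} := by
  classical
  -- a measurable extension of `u`
  set φ : ℝ → ℝ := fun x => u (max x 0) with hφdef
  have hφmeas : Measurable φ := by
    have h1 : Continuous ((Ici (0:ℝ)).restrict u) :=
      continuousOn_iff_continuous_restrict.mp hu_cont
    have h2 : Measurable fun x : ℝ => (⟨max x 0, le_max_right x 0⟩ : Ici (0:ℝ)) :=
      (measurable_id.max measurable_const).subtype_mk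
    exact h1.measurable.comp h2
  have hφX : ∀ ω, φ (X ω) = u (X ω) := fun ω => by
    simp [hφdef, max_eq_left (hX0 ω)]
  have huXmeas : Measurable fun ω => u (X ω) := by
    have : (fun ω => u (X ω)) = φ ∘ X := by
      funext ω; simp [hφX ω]
    rw [this]; exact hφmeas.comp hXm
  have hmono : MonotoneOn u (Ici 0) := hu_mono.monotoneOn
  have hΩ : Nonempty Ω := by
    by_contra h
    have : P univ = 0 := by
      rw [Set.univ_eq_empty_iff.mpr (not_nonempty_iff.mp h)]; simp
    simp [measure_univ] at this
  have hM0 : (0:ℝ) ≤ M := (hX0 hΩ.some).trans (hXb hΩ.some)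
  have hbound : ∀ ω, u (X ω) ≤ u M := fun ω =>
    hmono (hX0 ω) hM0 (hXb ω)
  have hInt : Integrable (fun ω => u (X ω)) P := by
    refine Integrable.mono' (integrable_const (u M)) huXmeas.aestronglyMeasurable ?_
    filter_upwards with ω
    rw [Real.norm_eq_abs, abs_of_nonneg (hu_nonneg _ (hX0 ω))]
    exact hbound ω
  set I : ℝ := ∫ ω, u (X ω) ∂P with hIdef
  have huz : ∀ x, 0 ≤ x → (u x ≠ 0 ↔ 0 < x) := by
    intro x hx
    constructor
    · intro h
      rcases hx.lt_or_eq with h' | h'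
      · exact h'
      · exact absurd (h'.symm ▸ hu0 : u x = 0) h
    · intro h
      have := hu_mono (le_refl (0:ℝ)) (le_of_lt h) h
      rw [hu0] at this
      exact ne_of_gt this
  have hIpos : 0 < I := by
    rw [hIdef]
    rw [integral_pos_iff_support_of_nonneg_ae
      (Filter.Eventually.of_forall fun ω => hu_nonneg _ (hX0 ω)) hInt]
    have hsupp : Function.support (fun ω => u (X ω)) = {ω | 0 < X ω} := by
      ext ω; simp only [Function.mem_support, mem_setOf_eq]
      exact huz _ (hX0 ω)
    rw [hsupp]; exact hXpos
  have hIne : I ≠ 0 := ne_of_gt hIpos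
  -- the basic pointwise identity
  have hpt : ∀ (A : Set Ω), (fun ω => u (X ω * A.indicator 1 ω))
      = A.indicator (fun ω => u (X ω)) := by
    intro A; funext ω
    by_cases h : ω ∈ A <;> simp [Set.indicator, h, hu0]
  ext v
  simp only [mem_setOf_eq]
  constructor
  · rintro ⟨A, hAm, hAd, hAu, rfl⟩
    refine ⟨fun i => (∫ ω in A i, u (X ω) ∂P) / I, ?_, ?_, ?_⟩
    · intro i
      refine div_nonneg ?_ hIpos.le
      exact setIntegral_nonneg (hAm i) fun ω _ => hu_nonneg _ (hX0 ω)
    · rw [← Finset.sum_div, div_eq_one_iff_eq hIne]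
      rw [← integral_iUnion_fintype hAm hAd fun i => hInt.integrableOn]
      rw [hAu, hIdef, Measure.restrict_univ]
    · funext i
      rw [div_mul_cancel₀ _ hIne, hpt, integral_indicator (hAm i)]
  · rintro ⟨θ, hθ0, hθ1, rfl⟩
    -- partial sums
    set θ' : ℕ → ℝ := fun j => if h : j < n then θ ⟨j, h⟩ else 0 with hθ'def
    have hθ'0 : ∀ j, 0 ≤ θ' j := by
      intro j; rw [hθ'def]; dsimp only; split
      · exact hθ0 _
      · exact le_refl 0
    set d : ℕ → ℝ := fun k => ∑ j ∈ Finset.range k, θ' j with hddef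
    have hdmono : Monotone d := by
      intro a b hab
      exact Finset.sum_le_sum_of_subset_of_nonneg (Finset.range_subset_range.mpr hab)
        (fun j _ _ => hθ'0 j)
    have hd0 : d 0 = 0 := by simp [hddef]
    have hdn : d n = 1 := by
      rw [hddef]
      calc ∑ j ∈ Finset.range n, θ' j = ∑ i : Fin n, θ' i := by
            rw [Fin.sum_univ_eq_sum_range]
        _ = ∑ i : Fin n, θ i := by
            apply Finset.sum_congr rfl; intro i _
            rw [hθ'def]; simp [i.isLt]
        _ = 1 := hθ1
    have hdpos : ∀ k, 0 ≤ d k := fun k => hd0 ▸ hdmono (Nat.zero_le k)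
    have hdle : ∀ k, k ≤ n → d k ≤ 1 := fun k hk => hdn ▸ hdmono hk
    have hdsucc : ∀ (i : Fin n), d ((i:ℕ) + 1) = d i + θ i := by
      intro i
      rw [hddef]; dsimp only
      rw [Finset.sum_range_succ]
      congr 1
      rw [hθ'def]; simp [i.isLt]
    -- the intervals
    set S : Fin n → Set ℝ := fun i =>
      (if (i:ℕ) = 0 then univ else Ici (d i)) ∩
      (if (i:ℕ) + 1 = n then univ else Iio (d ((i:ℕ) + 1))) with hSdef
    have hSmeas : ∀ i, MeasurableSet (S i) := by
      intro i
      apply MeasurableSet.inter <;> (split <;> measurability)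
    set A : Fin n → Set Ω := fun i => U ⁻¹' (S i) with hAdef
    have hAm : ∀ i, MeasurableSet (A i) := fun i => hUm (hSmeas i)
    -- disjointness
    have hSd : Pairwise (Function.onFun Disjoint S) := by
      have key : ∀ i j : Fin n, i < j → Disjoint (S i) (S j) := by
        intro i j hij
        rw [Set.disjoint_left]
        intro x hxi hxj
        have h1 : x < d ((i:ℕ) + 1) := by
          have : (i:ℕ) + 1 ≠ n := by
            have : (i:ℕ) + 1 ≤ (j:ℕ) := hij
            omega
          have := hxi.2
          rw [if_neg ‹(i:ℕ)+1 ≠ n›] at this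
          exact this
        have h2 : d (j:ℕ) ≤ x := by
          have hj0 : (j:ℕ) ≠ 0 := by
            have : (i:ℕ) < (j:ℕ) := hij
            omega
          have := hxj.1
          rw [if_neg hj0] at this
          exact this
        have : d ((i:ℕ)+1) ≤ d (j:ℕ) := hdmono (by exact_mod_cast hij)
        linarith
      intro i j hij
      rcases lt_or_gt_of_ne hij with h | h
      · exact key i j h
      · exact (key j i h).symm
    have hAd : Pairwise (Function.onFun Disjoint A) := fun i j hij =>
      (hSd hij).preimage U
    -- union is everything
    have hSu : (⋃ i, S i) = univ := by
      rw [Set.eq_univ_iff_forall]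
      intro x
      by_cases hx0 : x < 0
      · refine Set.mem_iUnion.mpr ⟨⟨0, hn⟩, ?_, ?_⟩
        · simp
        · dsimp only; split
          · trivial
          · exact lt_of_lt_of_le hx0 (hdpos _)
      push_neg at hx0
      obtain ⟨k, hkn, hk1, hk2⟩ :
          ∃ k, k ≤ n - 1 ∧ d k ≤ x ∧ (k + 1 ≤ n - 1 → x < d (k + 1)) := by
        refine ⟨Nat.findGreatest (fun k => d k ≤ x) (n - 1), Nat.findGreatest_le _,
          Nat.findGreatest_spec (P := fun k => d k ≤ x) (Nat.zero_le _)
            (by simpa [hd0] using hx0), ?_⟩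
        intro hle
        have := Nat.findGreatest_is_greatest (P := fun k => d k ≤ x)
          (lt_add_one _) hle
        exact not_le.mp this
      have hklt : k < n := by omega
      refine Set.mem_iUnion.mpr ⟨⟨k, hklt⟩, ?_, ?_⟩
      · dsimp only; split
        · trivial
        · exact hk1
      · dsimp only; split
        · trivial
        · rename_i hne
          have hne' : ¬(k + 1 = n) := hne
          exact hk2 (by omega)
    have hAu : (⋃ i, A i) = univ := by
      rw [hAdef]
      simp only [← Set.preimage_iUnion, hSu, Set.preimage_univ]
    -- measure of each piece
    have hPA : ∀ i, P (A i) = ENNReal.ofReal (θ i) := by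
      intro i
      rw [hAdef]
      have : P (U ⁻¹' S i) = P.map U (S i) :=
        (Measure.map_apply hUm (hSmeas i)).symm
      rw [this, hUlaw, Measure.restrict_apply (hSmeas i)]
      have hθd : θ i = d ((i:ℕ)+1) - d i := by rw [hdsucc i]; ring
      have hle1 : d ((i:ℕ)+1) ≤ 1 := hdle _ i.isLt
      have h0le : 0 ≤ d (i:ℕ) := hdpos _
      rw [hSdef]
      dsimp only
      by_cases h0 : (i:ℕ) = 0 <;> by_cases hl : (i:ℕ) + 1 = n
      · -- n = 1, S = univ
        rw [if_pos h0, if_pos hl]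
        simp only [Set.univ_inter]
        rw [Real.volume_Icc]
        rw [hθd, hl, h0, hdn, hd0]
      · rw [if_pos h0, if_neg hl]
        simp only [Set.univ_inter]
        have : Iio (d ((i:ℕ)+1)) ∩ Icc 0 1 = Ico 0 (d ((i:ℕ)+1)) := by
          ext y
          simp only [mem_inter_iff, mem_Iio, mem_Icc, mem_Ico]
          constructor
          · rintro ⟨h1, h2, _⟩; exact ⟨h2, h1⟩
          · rintro ⟨h1, h2⟩; exact ⟨h2, h1, h2.le.trans hle1⟩
        rw [this, Real.volume_Ico, hθd, h0, hd0]
      · rw [if_neg h0, if_pos hl]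
        simp only [Set.inter_univ]
        have : Ici (d (i:ℕ)) ∩ Icc 0 1 = Icc (d (i:ℕ)) 1 := by
          ext y
          simp only [mem_inter_iff, mem_Ici, mem_Icc]
          constructor
          · rintro ⟨h1, _, h2⟩; exact ⟨h1, h2⟩
          · rintro ⟨h1, h2⟩; exact ⟨h1, le_trans h0le h1, h2⟩
        rw [this, Real.volume_Icc, hθd, hl, hdn]
      · rw [if_neg h0, if_neg hl]
        have : Ici (d (i:ℕ)) ∩ Iio (d ((i:ℕ)+1)) ∩ Icc 0 1
            = Ico (d (i:ℕ)) (d ((i:ℕ)+1)) := by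
          ext y
          simp only [mem_inter_iff, mem_Ici, mem_Iio, mem_Icc, mem_Ico]
          constructor
          · rintro ⟨⟨h1, h2⟩, _⟩; exact ⟨h1, h2⟩
          · rintro ⟨h1, h2⟩
            exact ⟨⟨h1, h2⟩, le_trans h0le h1, le_trans h2.le hle1⟩
        rw [this, Real.volume_Ico, hθd]
    -- independence gives the integral identity
    refine ⟨A, hAm, hAd, hAu, ?_⟩
    funext i
    rw [hpt (A i), integral_indicator (hAm i)]
    -- ∫ over A i of u∘X = θ i * I
    have hind : IndepFun ((S i).indicator (1 : ℝ → ℝ) ∘ U) (φ ∘ X) P :=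
      hUindep.comp (measurable_one.indicator (hSmeas i)) hφmeas
    have hintA : Integrable ((S i).indicator (1 : ℝ → ℝ) ∘ U) P := by
      refine Integrable.mono' (integrable_const 1)
        ((measurable_one.indicator (hSmeas i)).comp hUm).aestronglyMeasurable ?_
      filter_upwards with ω
      rw [Real.norm_eq_abs]
      by_cases h : U ω ∈ S i <;>
        simp [Function.comp, Set.indicator, h]
    have hintX : Integrable (φ ∘ X) P := by
      have : φ ∘ X = fun ω => u (X ω) := by funext ω; exact hφX ω
      rw [this]; exact hInt
    have hmul := IndepFun.integral_mul_eq_mul_integral hind hintA.aestronglyMeasurable hintX.aestronglyMeasurable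
    have hlhs : ((S i).indicator (1 : ℝ → ℝ) ∘ U) * (φ ∘ X)
        = (A i).indicator (fun ω => u (X ω)) := by
      funext ω
      simp only [Pi.mul_apply, Function.comp_apply]
      by_cases h : ω ∈ A i
      · have hs : U ω ∈ S i := h
        simp [Set.indicator, hs, h, hφX ω]
      · have hs : U ω ∉ S i := h
        simp [Set.indicator, hs, h]
    rw [hlhs] at hmul
    have hind1 : ∫ ω, ((S i).indicator (1 : ℝ → ℝ) ∘ U) ω ∂P = θ i := by
      have : ((S i).indicator (1 : ℝ → ℝ) ∘ U) = (A i).indicator (fun _ => (1:ℝ)) := by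
        funext ω
        by_cases h : ω ∈ A i
        · have hs : U ω ∈ S i := h
          simp [Set.indicator, hs, h]
        · have hs : U ω ∉ S i := h
          simp [Set.indicator, hs, h]
      rw [this, integral_indicator_const _ (hAm i), Measure.real, hPA i, smul_eq_mul, mul_one,
        ENNReal.toReal_ofReal (hθ0 i)]
    rw [integral_indicator (hAm i)] at hmul
    rw [hmul, hind1]
    have hφXeq : φ ∘ X = fun ω => u (X ω) := funext hφX
    rw [hφXeq]
end

section
/- Individual optimality of jackpot allocations under the comonotone price: Let u: ℝ₊ → ℝ₊ be such that x ↦ u(x)/x is increasing on (0,∞) with u(0) = 0, let X ≥ 0 be bounded with E[u(X)/X] =: z ∈ (0,∞), and define the price measure Q by dQ/dP = (u(X)/X)/z. Let A be an event independent of X under P. Then for every random variable Y with 0 ≤ Y ≤ X and E^Q[Y] ≤ E^Q[X·1_A], we have E[u(Y)] ≤ E[u(X·1_A)]. In particular X·1_A solves the agent's budget-constrained EU maximization at price Q. -/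
open MeasureTheory Set ProbabilityTheory

/-- Individual optimality of jackpot allocations under the comonotone price
`dQ/dP = (u(X)/X)/z` with `z = E[u(X)/X]`: any budget-feasible `0 ≤ Y ≤ X` satisfies
`E[u(Y)] ≤ E[u(X·1_A)]` for an event `A` independent of `X`. (Convention `0/0 = 0`.) -/
theorem stmt13 {Ω : Type*} [MeasurableSpace Ω] (P : Measure Ω) [IsProbabilityMeasure P]
    (u : ℝ → ℝ) (hu0 : u 0 = 0) (hu_nonneg : ∀ x, 0 ≤ x → 0 ≤ u x)
    (hratio : ∀ x y : ℝ, 0 < x → x ≤ y → u x / x ≤ u y / y)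
    (X : Ω → ℝ) (hXm : Measurable X) (hX0 : ∀ ω, 0 ≤ X ω) (M : ℝ) (hXb : ∀ ω, X ω ≤ M)
    (z : ℝ) (hz : z = ∫ ω, u (X ω) / X ω ∂P) (hzpos : 0 < z)
    (Q : Measure Ω)
    (hQ : Q = P.withDensity fun ω => ENNReal.ofReal (u (X ω) / X ω / z))
    (A : Set Ω) (hAm : MeasurableSet A)
    (hAindep : IndepFun (A.indicator (1 : Ω → ℝ)) X P) :
    ∀ Y : Ω → ℝ, Measurable Y → (∀ ω, 0 ≤ Y ω ∧ Y ω ≤ X ω) →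
      ∫ ω, Y ω ∂Q ≤ ∫ ω, X ω * A.indicator 1 ω ∂Q →
      ∫ ω, u (Y ω) ∂P ≤ ∫ ω, u (X ω * A.indicator 1 ω) ∂P := by
  intro Y hYm hY hbudget
  -- the "ratio" function, extended monotonically by 0 on (-∞, 0]
  set s : ℝ → ℝ := fun x => if 0 < x then u x / x else 0 with hs_def
  have hs_nonneg : ∀ x, 0 ≤ s x := by
    intro x
    simp only [hs_def]
    split_ifs with h
    · exact div_nonneg (hu_nonneg x h.le) h.le
    · exact le_rfl
  have hs_mono : Monotone s := by
    intro a b hab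
    simp only [hs_def]
    split_ifs with ha hb hb
    · exact hratio a b ha hab
    · exact absurd (lt_of_lt_of_le ha hab) hb
    · exact div_nonneg (hu_nonneg b hb.le) hb.le
    · exact le_rfl
  have hs_meas : Measurable s := hs_mono.measurable
  have hs_eq : ∀ x : ℝ, 0 ≤ x → u x = x * s x := by
    intro x hx
    rcases hx.lt_or_eq with h | h
    · simp only [hs_def, if_pos h]
      field_simp
    · simp [hs_def, ← h, hu0]
  -- bound
  set C : ℝ := max M 0 with hC_def
  have hC0 : 0 ≤ C := le_max_right _ _
  have hXC : ∀ ω, X ω ≤ C := fun ω => le_max_of_le_left (hXb ω)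
  have hbound : ∀ (f : Ω → ℝ), (∀ ω, 0 ≤ f ω) → (∀ ω, f ω ≤ X ω) →
      ∀ ω, |f ω * s (f ω)| ≤ C * s C := by
    intro f hf0 hfX ω
    rw [abs_of_nonneg (mul_nonneg (hf0 ω) (hs_nonneg _))]
    have hfC : f ω ≤ C := (hfX ω).trans (hXC ω)
    exact mul_le_mul hfC (hs_mono hfC) (hs_nonneg _) hC0
  have hint : ∀ (f : Ω → ℝ), Measurable f → (∀ ω, |f ω| ≤ C * s C) →
      Integrable f P := by
    intro f hf hb
    exact (integrable_const (C * s C)).mono' hf.aestronglyMeasurable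
      (Filter.Eventually.of_forall fun ω => by simpa using hb ω)
  -- rewrite Q
  have hsX : ∀ ω, u (X ω) / X ω = s (X ω) := by
    intro ω
    rcases (hX0 ω).lt_or_eq with h | h
    · simp [hs_def, h]
    · simp [hs_def, ← h, hu0]
  have hQ' : Q = P.withDensity fun ω => ((Real.toNNReal (s (X ω) / z) : NNReal) : ENNReal) := by
    rw [hQ]
    congr 1
    ext ω
    rw [hsX ω]
    rfl
  have hdens_meas : Measurable fun ω => Real.toNNReal (s (X ω) / z) :=
    ((hs_meas.comp hXm).div_const z).real_toNNReal
  have key : ∀ g : Ω → ℝ, ∫ ω, g ω ∂Q = ∫ ω, (s (X ω) / z) * g ω ∂P := by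
    intro g
    rw [hQ', integral_withDensity_eq_integral_smul hdens_meas g]
    congr 1
    ext ω
    rw [NNReal.smul_def, Real.coe_toNNReal _ (div_nonneg (hs_nonneg _) hzpos.le)]
    rfl
  have key' : ∀ g : Ω → ℝ, z * ∫ ω, g ω ∂Q = ∫ ω, g ω * s (X ω) ∂P := by
    intro g
    rw [key g, ← integral_const_mul]
    congr 1
    ext ω
    field_simp
  -- indicator function facts
  have hind : ∀ ω, A.indicator (1 : Ω → ℝ) ω = 0 ∨ A.indicator (1 : Ω → ℝ) ω = 1 := by
    intro ω
    by_cases h : ω ∈ A <;> simp [h]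
  have hXA_meas : Measurable fun ω => X ω * A.indicator 1 ω :=
    hXm.mul (measurable_one.indicator hAm)
  -- Step 1 : ∫ u(Y) ≤ ∫ Y * s(X)
  have step1 : ∫ ω, u (Y ω) ∂P ≤ ∫ ω, Y ω * s (X ω) ∂P := by
    have h1 : ∫ ω, u (Y ω) ∂P = ∫ ω, Y ω * s (Y ω) ∂P := by
      congr 1; ext ω; exact hs_eq _ (hY ω).1
    rw [h1]
    apply integral_mono
    · exact hint _ (hYm.mul (hs_meas.comp hYm))
        (hbound Y (fun ω => (hY ω).1) (fun ω => (hY ω).2))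
    · exact hint _ (hYm.mul (hs_meas.comp hXm)) (by
        intro ω
        rw [abs_of_nonneg (mul_nonneg (hY ω).1 (hs_nonneg _))]
        calc Y ω * s (X ω) ≤ C * s C := by
              exact mul_le_mul ((hY ω).2.trans (hXC ω)) (hs_mono (hXC ω))
                (hs_nonneg _) hC0
            _ ≤ C * s C := le_rfl)
    · intro ω
      exact mul_le_mul_of_nonneg_left (hs_mono (hY ω).2) (hY ω).1
  -- Step 2: budget times z
  have step2 : ∫ ω, Y ω * s (X ω) ∂P ≤ ∫ ω, (X ω * A.indicator 1 ω) * s (X ω) ∂P := by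
    rw [← key' Y, ← key' (fun ω => X ω * A.indicator 1 ω)]
    exact mul_le_mul_of_nonneg_left hbudget hzpos.le
  -- Step 3: identify with E[u(X·1_A)]
  have step3 : ∫ ω, (X ω * A.indicator 1 ω) * s (X ω) ∂P
      = ∫ ω, u (X ω * A.indicator 1 ω) ∂P := by
    congr 1; ext ω
    rcases hind ω with h | h
    · simp [h, hu0]
    · simp only [h, mul_one]
      exact (hs_eq _ (hX0 ω)).symm
  calc ∫ ω, u (Y ω) ∂P ≤ ∫ ω, Y ω * s (X ω) ∂P := step1
    _ ≤ ∫ ω, (X ω * A.indicator 1 ω) * s (X ω) ∂P := step2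
    _ = ∫ ω, u (X ω * A.indicator 1 ω) ∂P := step3
end

section
/- Equilibrium allocations of strictly risk-seeking agents are extreme: Suppose agent i has strictly convex, strictly increasing utility u_i with u_i(0) = 0, the probability space is atomless, and (X_1,...,X_n, Q) is a competitive equilibrium (each X_i maximizes E[u_i(Z)] over 0 ≤ Z ≤ X subject to E^Q[Z] ≤ E^Q[ξ_i]). Then for every strictly risk-seeking agent i, X_i·(X − X_i) = 0 almost surely, i.e., in every state agent i receives either nothing or the entire aggregate endowment. Consequently, if S is the set of strictly risk-seeking agents and Y = X − ∑_{i∈S} X_i, then ((X_i)_{i∈S}, Y) is a jackpot allocation. -/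
open MeasureTheory Set

lemma aux_int_pos {Ω : Type*} [MeasurableSpace Ω] {P : Measure Ω} {f : Ω → ℝ}
    (hfi : Integrable f P) (h0 : 0 ≤ᵐ[P] f) {s : Set Ω} (hs : 0 < P s)
    (hpos : ∀ᵐ ω ∂P, ω ∈ s → 0 < f ω) : 0 < ∫ ω, f ω ∂P := by
  rw [integral_pos_iff_support_of_nonneg_ae h0 hfi]
  have hnull : P {ω | ¬(ω ∈ s → 0 < f ω)} = 0 := by
    simpa [ae_iff] using hpos
  have hsub : s ⊆ Function.support f ∪ {ω | ¬(ω ∈ s → 0 < f ω)} := by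
    intro ω hω
    by_cases h : 0 < f ω
    · exact Or.inl (ne_of_gt h)
    · exact Or.inr (fun himp => h (himp hω))
  calc (0 : ENNReal) < P s := hs
    _ ≤ P (Function.support f ∪ {ω | ¬(ω ∈ s → 0 < f ω)}) := measure_mono hsub
    _ ≤ P (Function.support f) + P {ω | ¬(ω ∈ s → 0 < f ω)} := measure_union_le _ _
    _ = P (Function.support f) := by rw [hnull, add_zero]

lemma aux_key {Ω : Type*} [MeasurableSpace Ω] (P : Measure Ω) [IsProbabilityMeasure P]
    (hatomless : ∀ s : Set Ω, MeasurableSet s → 0 < P s →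
      ∃ t, t ⊆ s ∧ MeasurableSet t ∧ 0 < P t ∧ P t < P s)
    (v : ℝ → ℝ) (hv_mono : StrictMonoOn v (Ici 0)) (hv_cont : Continuous v)
    (hv_conv : StrictConvexOn ℝ (Ici 0) v)
    (X : Ω → ℝ) (hXm : Measurable X) (hX0 : ∀ ω, 0 ≤ X ω) (M : ℝ) (hXb : ∀ ω, X ω ≤ M)
    (Q : Measure Ω) [IsProbabilityMeasure Q] (hQP : Q ≪ P)
    (c : ℝ) (f : Ω → ℝ) (hfm : Measurable f)
    (hrange : ∀ᵐ ω ∂P, 0 ≤ f ω ∧ f ω ≤ X ω)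
    (hb : ∫ ω, f ω ∂Q ≤ c)
    (hopt : ∀ Z : Ω → ℝ, Measurable Z → (∀ᵐ ω ∂P, 0 ≤ Z ω ∧ Z ω ≤ X ω) →
      ∫ ω, Z ω ∂Q ≤ c → ∫ ω, v (Z ω) ∂P ≤ ∫ ω, v (f ω) ∂P) :
    ∀ᵐ ω ∂P, f ω * (X ω - f ω) = 0 := by
  -- the "bad" set
  set B : Set Ω := {ω | 0 < f ω} ∩ {ω | f ω < X ω} with hBdef
  have hPB : P B = 0 := by
    by_contra hPB
    have hPBpos : 0 < P B := pos_iff_ne_zero.mpr hPB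
    -- approximating sets
    set A : ℕ → Set Ω := fun k =>
      {ω | 1/((k:ℝ)+1) ≤ f ω} ∩ {ω | f ω + 1/((k:ℝ)+1) ≤ X ω} with hAdef
    have hAm : ∀ k, MeasurableSet (A k) := fun k =>
      (measurableSet_le measurable_const hfm).inter
        (measurableSet_le (hfm.add measurable_const) hXm)
    have hBsub : B ⊆ ⋃ k, A k := by
      intro ω hω
      obtain ⟨k, hk⟩ := exists_nat_one_div_lt
        (lt_min hω.1 (sub_pos.2 hω.2) : (0:ℝ) < min (f ω) (X ω - f ω))
      refine mem_iUnion.2 ⟨k, ⟨(hk.trans_le (min_le_left _ _)).le, ?_⟩⟩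
      have := hk.trans_le (min_le_right (f ω) (X ω - f ω))
      simp only [mem_setOf_eq]
      linarith
    obtain ⟨m, hPA⟩ : ∃ m, 0 < P (A m) := by
      by_contra h
      push_neg at h
      have : P B = 0 := measure_mono_null hBsub
        (measure_iUnion_null fun k => le_antisymm (h k) zero_le)
      exact hPB this
    set ε : ℝ := 1/((m:ℝ)+1) with hεdef
    have hε : 0 < ε := by positivity
    set A₀ : Set Ω := A m with hA₀def
    have hA₀m : MeasurableSet A₀ := hAm m
    have hA₀prop : ∀ ω ∈ A₀, ε ≤ f ω ∧ f ω + ε ≤ X ω := fun ω hω => ⟨hω.1, hω.2⟩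
    -- nonnegativity of M
    obtain ⟨ω₀, hω₀⟩ := nonempty_of_measure_ne_zero hPA.ne'
    have hM0 : (0:ℝ) ≤ M := (hX0 ω₀).trans (hXb ω₀)
    -- integrability of compositions
    obtain ⟨C, hC⟩ := (isCompact_Icc : IsCompact (Icc (0:ℝ) M)).exists_bound_of_continuousOn
      hv_cont.continuousOn
    have hint : ∀ Z : Ω → ℝ, Measurable Z → (∀ᵐ ω ∂P, 0 ≤ Z ω ∧ Z ω ≤ X ω) →
        Integrable (fun ω => v (Z ω)) P := by
      intro Z hZm hZr
      refine Integrable.mono' (integrable_const C)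
        ((hv_cont.measurable.comp hZm).aestronglyMeasurable) ?_
      filter_upwards [hZr] with ω h
      exact hC _ ⟨h.1, h.2.trans (hXb ω)⟩
    -- Q-integrability of f
    have hrangeQ : ∀ᵐ ω ∂Q, 0 ≤ f ω ∧ f ω ≤ X ω := hQP.ae_le hrange
    have hfQint : Integrable f Q := by
      refine Integrable.mono' (integrable_const M) hfm.aestronglyMeasurable ?_
      filter_upwards [hrangeQ] with ω h
      rw [Real.norm_eq_abs, abs_le]
      exact ⟨by linarith, h.2.trans (hXb ω)⟩
    by_cases hQA : Q A₀ = 0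
    · -- push up on A₀, free of charge
      set Z : Ω → ℝ := fun ω => f ω + A₀.indicator (fun _ => ε) ω with hZdef
      have hZm : Measurable Z := hfm.add (measurable_const.indicator hA₀m)
      have hZr : ∀ᵐ ω ∂P, 0 ≤ Z ω ∧ Z ω ≤ X ω := by
        filter_upwards [hrange] with ω h
        by_cases hω : ω ∈ A₀
        · have := hA₀prop ω hω
          simp only [hZdef, indicator_of_mem hω]
          constructor <;> linarith
        · simp only [hZdef, indicator_of_notMem hω, add_zero]
          exact h
      have hZb : ∫ ω, Z ω ∂Q ≤ c := by
        have : ∫ ω, Z ω ∂Q = ∫ ω, f ω ∂Q + ∫ ω, A₀.indicator (fun _ => ε) ω ∂Q :=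
          integral_add hfQint ((integrable_const ε).indicator hA₀m)
        rw [this, integral_indicator_const ε hA₀m, measureReal_def, hQA]
        simpa using hb
      have hle := hopt Z hZm hZr hZb
      have hpos : 0 < ∫ ω, (v (Z ω) - v (f ω)) ∂P := by
        refine aux_int_pos ((hint Z hZm hZr).sub (hint f hfm hrange)) ?_ hPA ?_
        · refine Filter.Eventually.of_forall fun ω => ?_
          simp only [Pi.zero_apply]
          by_cases hω : ω ∈ A₀
          · have hp := hA₀prop ω hω
            have h0f : (0:ℝ) ≤ f ω := le_trans hε.le hp.1
            have : v (f ω) < v (f ω + ε) :=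
              hv_mono h0f (by linarith : (0:ℝ) ≤ f ω + ε) (by linarith)
            simp only [hZdef, indicator_of_mem hω]
            linarith
          · simp [hZdef, indicator_of_notMem hω]
        · refine Filter.Eventually.of_forall fun ω hω => ?_
          have hp := hA₀prop ω hω
          have h0f : (0:ℝ) ≤ f ω := le_trans hε.le hp.1
          have : v (f ω) < v (f ω + ε) :=
            hv_mono h0f (by linarith : (0:ℝ) ≤ f ω + ε) (by linarith)
          simp only [hZdef, indicator_of_mem hω]
          linarith
      rw [integral_sub (hint Z hZm hZr) (hint f hfm hrange)] at hpos
      linarith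
    · -- split A₀ and transfer budget between the pieces
      obtain ⟨t, hts, htm, hPt, hPtlt⟩ := hatomless A₀ hA₀m hPA
      have hPdiff : 0 < P (A₀ \ t) := by
        by_contra h
        push_neg at h
        have h0 : P (A₀ \ t) = 0 := le_antisymm h zero_le
        have : P A₀ ≤ P t := by
          calc P A₀ ≤ P (t ∪ (A₀ \ t)) := measure_mono (fun ω hω => by
            by_cases h' : ω ∈ t
            · exact Or.inl h'
            · exact Or.inr ⟨hω, h'⟩)
          _ ≤ P t + P (A₀ \ t) := measure_union_le _ _
          _ = P t := by rw [h0, add_zero]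
        exact absurd hPtlt (not_lt.2 this)
      obtain ⟨t', s', htm', hsm', hta, hsa, hdisj, hQt', hPs'⟩ :
          ∃ t' s' : Set Ω, MeasurableSet t' ∧ MeasurableSet s' ∧ t' ⊆ A₀ ∧ s' ⊆ A₀ ∧
            Disjoint t' s' ∧ Q t' ≠ 0 ∧ 0 < P s' := by
        by_cases hQt : Q t = 0
        · exact ⟨A₀ \ t, t, hA₀m.diff htm, htm, diff_subset, hts, disjoint_sdiff_left,
            by rw [measure_diff_null hQt]; exact hQA, hPt⟩
        · exact ⟨t, A₀ \ t, htm, hA₀m.diff htm, hts, diff_subset, disjoint_sdiff_right,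
            hQt, hPdiff⟩
      set a : ℝ := ε * (Q s').toReal with hadef
      set b : ℝ := ε * (Q t').toReal with hbdef
      have hQs1 : (Q s').toReal ≤ 1 := by
        have h1 := ENNReal.toReal_mono ENNReal.one_ne_top (prob_le_one (μ := Q) (s := s'))
        simpa using h1
      have hQt1 : (Q t').toReal ≤ 1 := by
        have h1 := ENNReal.toReal_mono ENNReal.one_ne_top (prob_le_one (μ := Q) (s := t'))
        simpa using h1
      have ha0 : 0 ≤ a := mul_nonneg hε.le ENNReal.toReal_nonneg
      have haε : a ≤ ε := by
        calc a ≤ ε * 1 := mul_le_mul_of_nonneg_left hQs1 hε.le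
        _ = ε := mul_one ε
      have hb0 : 0 < b := mul_pos hε (ENNReal.toReal_pos hQt' (measure_ne_top Q t'))
      have hbε : b ≤ ε := by
        calc b ≤ ε * 1 := mul_le_mul_of_nonneg_left hQt1 hε.le
        _ = ε := mul_one ε
      set g : Ω → ℝ := fun ω => t'.indicator (fun _ => a) ω + s'.indicator (fun _ => -b) ω
        with hgdef
      have hgm : Measurable g :=
        (measurable_const.indicator htm').add (measurable_const.indicator hsm')
      have hgt : ∀ ω ∈ t', g ω = a := fun ω hω => by
        simp [hgdef, indicator_of_mem hω, indicator_of_notMem (disjoint_left.mp hdisj hω)]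
      have hgs : ∀ ω ∈ s', g ω = -b := fun ω hω => by
        simp [hgdef, indicator_of_notMem (disjoint_right.mp hdisj hω), indicator_of_mem hω]
      have hgo : ∀ ω, ω ∉ t' → ω ∉ s' → g ω = 0 := fun ω h1 h2 => by
        simp [hgdef, indicator_of_notMem h1, indicator_of_notMem h2]
      -- pointwise bounds on the perturbed allocations on A₀
      have hbound : ∀ ω, (0 ≤ f ω ∧ f ω ≤ X ω) →
          (0 ≤ f ω + g ω ∧ f ω + g ω ≤ X ω) ∧ (0 ≤ f ω - g ω ∧ f ω - g ω ≤ X ω) := by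
        intro ω h
        by_cases h1 : ω ∈ t'
        · have hp := hA₀prop ω (hta h1)
          rw [hgt ω h1]
          refine ⟨⟨by linarith, by linarith⟩, ⟨by linarith, by linarith⟩⟩
        · by_cases h2 : ω ∈ s'
          · have hp := hA₀prop ω (hsa h2)
            rw [hgs ω h2]
            refine ⟨⟨by linarith, by linarith⟩, ⟨by linarith, by linarith⟩⟩
          · rw [hgo ω h1 h2]
            refine ⟨⟨by linarith [h.1], by linarith [h.2]⟩,
              ⟨by linarith [h.1], by linarith [h.2]⟩⟩
      have hZPr : ∀ᵐ ω ∂P, 0 ≤ f ω + g ω ∧ f ω + g ω ≤ X ω := by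
        filter_upwards [hrange] with ω h; exact (hbound ω h).1
      have hZMr : ∀ᵐ ω ∂P, 0 ≤ f ω - g ω ∧ f ω - g ω ≤ X ω := by
        filter_upwards [hrange] with ω h; exact (hbound ω h).2
      have hZPm : Measurable fun ω => f ω + g ω := hfm.add hgm
      have hZMm : Measurable fun ω => f ω - g ω := hfm.sub hgm
      -- budget neutrality of g
      have hgQint : Integrable g Q :=
        (((integrable_const a).indicator htm').add ((integrable_const (-b)).indicator hsm'))
      have hgQ : ∫ ω, g ω ∂Q = 0 := by
        have : ∫ ω, g ω ∂Q = ∫ ω, t'.indicator (fun _ => a) ω ∂Q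
            + ∫ ω, s'.indicator (fun _ => -b) ω ∂Q :=
          integral_add ((integrable_const a).indicator htm')
            ((integrable_const (-b)).indicator hsm')
        rw [this, integral_indicator_const _ htm', integral_indicator_const _ hsm']
        simp only [smul_eq_mul, hadef, hbdef, measureReal_def]
        ring
      have hZPb : ∫ ω, (f ω + g ω) ∂Q ≤ c := by
        rw [integral_add hfQint hgQint, hgQ, add_zero]; exact hb
      have hZMb : ∫ ω, (f ω - g ω) ∂Q ≤ c := by
        rw [integral_sub hfQint hgQint, hgQ, sub_zero]; exact hb
      have hleP := hopt _ hZPm hZPr hZPb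
      have hleM := hopt _ hZMm hZMr hZMb
      -- strict convexity gives a contradiction
      have hintP := hint _ hZPm hZPr
      have hintM := hint _ hZMm hZMr
      have hintf := hint f hfm hrange
      have hintsum : Integrable (fun ω => v (f ω + g ω) + v (f ω - g ω)) P := hintP.add hintM
      have hint2f : Integrable (fun ω => 2 * v (f ω)) P := hintf.const_mul 2
      have hpos : 0 < ∫ ω, (v (f ω + g ω) + v (f ω - g ω) - 2 * v (f ω)) ∂P := by
        refine aux_int_pos (hintsum.sub hint2f) ?_ hPs' ?_
        · filter_upwards [hrange] with ω h
          have hB := hbound ω h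
          have hmid : (1/2 : ℝ) • (f ω + g ω) + (1/2 : ℝ) • (f ω - g ω) = f ω := by
            simp only [smul_eq_mul]; ring
          have := hv_conv.convexOn.2 (mem_Ici.2 hB.1.1) (mem_Ici.2 hB.2.1)
            (by norm_num : (0:ℝ) ≤ 1/2) (by norm_num : (0:ℝ) ≤ 1/2) (by norm_num)
          rw [hmid] at this
          simp only [smul_eq_mul] at this
          simp only [Pi.zero_apply]
          linarith
        · filter_upwards [hrange] with ω h hω
          have hB := hbound ω h
          have hmid : (1/2 : ℝ) • (f ω + g ω) + (1/2 : ℝ) • (f ω - g ω) = f ω := by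
            simp only [smul_eq_mul]; ring
          have hne : f ω + g ω ≠ f ω - g ω := by
            rw [hgs ω hω]; intro hcontra; nlinarith
          have := hv_conv.2 (mem_Ici.2 hB.1.1) (mem_Ici.2 hB.2.1) hne
            (by norm_num : (0:ℝ) < 1/2) (by norm_num : (0:ℝ) < 1/2) (by norm_num)
          rw [hmid] at this
          simp only [smul_eq_mul] at this
          linarith
      rw [integral_sub hintsum hint2f, integral_add hintP hintM, integral_const_mul] at hpos
      linarith
  -- conclude from P B = 0
  have h1 : ∀ᵐ ω ∂P, ω ∉ B := by
    rw [ae_iff]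
    simpa using hPB
  filter_upwards [h1, hrange] with ω hnB hr
  rw [hBdef] at hnB
  simp only [mem_inter_iff, mem_setOf_eq, not_and_or, not_lt] at hnB
  rcases hnB with h | h
  · have : f ω = 0 := le_antisymm h hr.1
    rw [this, zero_mul]
  · have : f ω = X ω := le_antisymm hr.2 h
    rw [this, sub_self, mul_zero]

/-- Equilibrium allocations of strictly risk-seeking agents are extreme: on an atomless
space, each strictly risk-seeking agent `i ∈ S` receives either `0` or the entire
aggregate endowment `X` in every state, so `((X_i)_{i∈S}, X − ∑_{i∈S} X_i)` is a jackpot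
allocation. -/
theorem stmt14 {Ω : Type*} [MeasurableSpace Ω] (P : Measure Ω) [IsProbabilityMeasure P]
    (hatomless : ∀ s : Set Ω, MeasurableSet s → 0 < P s →
      ∃ t, t ⊆ s ∧ MeasurableSet t ∧ 0 < P t ∧ P t < P s)
    {n : ℕ} (u : Fin n → ℝ → ℝ)
    (hu_mono : ∀ i, StrictMonoOn (u i) (Ici 0))
    (hu_cont : ∀ i, ContinuousOn (u i) (Ici 0))
    (hu0 : ∀ i, u i 0 = 0)
    (S : Finset (Fin n)) (hu_conv : ∀ i ∈ S, StrictConvexOn ℝ (Ici 0) (u i))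
    (X : Ω → ℝ) (hXm : Measurable X) (hX0 : ∀ ω, 0 ≤ X ω) (M : ℝ) (hXb : ∀ ω, X ω ≤ M)
    (Q : Measure Ω) [IsProbabilityMeasure Q] (hQP : Q ≪ P)
    (ξ : Fin n → Ω → ℝ) (hξm : ∀ i, Measurable (ξ i)) (hξ0 : ∀ i ω, 0 ≤ ξ i ω)
    (hξsum : ∀ ω, ∑ i, ξ i ω = X ω)
    (Xv : Fin n → Ω → ℝ) (hXvm : ∀ i, Measurable (Xv i))
    (hXvrange : ∀ i, ∀ᵐ ω ∂P, 0 ≤ Xv i ω ∧ Xv i ω ≤ X ω)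
    (hbudget : ∀ i, ∫ ω, Xv i ω ∂Q ≤ ∫ ω, ξ i ω ∂Q)
    (hopt : ∀ i, ∀ Z : Ω → ℝ, Measurable Z → (∀ᵐ ω ∂P, 0 ≤ Z ω ∧ Z ω ≤ X ω) →
      ∫ ω, Z ω ∂Q ≤ ∫ ω, ξ i ω ∂Q → ∫ ω, u i (Z ω) ∂P ≤ ∫ ω, u i (Xv i ω) ∂P)
    (hclear : ∀ᵐ ω ∂P, ∑ i, Xv i ω = X ω) :
    (∀ i ∈ S, ∀ᵐ ω ∂P, Xv i ω * (X ω - Xv i ω) = 0) ∧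
    (∀ i ∈ S, ∀ j ∈ S, i ≠ j → ∀ᵐ ω ∂P, Xv i ω * Xv j ω = 0) ∧
    (∀ i ∈ S, ∀ᵐ ω ∂P, Xv i ω * (X ω - ∑ j ∈ S, Xv j ω) = 0) := by
  have part1 : ∀ i ∈ S, ∀ᵐ ω ∂P, Xv i ω * (X ω - Xv i ω) = 0 := by
    intro i hi
    set v : ℝ → ℝ := fun x => u i (max x 0) with hvdef
    have hveq : ∀ x : ℝ, 0 ≤ x → v x = u i x := fun x hx => by
      simp [hvdef, max_eq_left hx]
    have hv_cont : Continuous v := by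
      have h1 : Continuous fun x : ℝ => (⟨max x 0, le_max_right x 0⟩ : Ici (0:ℝ)) :=
        Continuous.subtype_mk (continuous_id.max continuous_const) _
      exact (continuousOn_iff_continuous_restrict.mp (hu_cont i)).comp h1
    have hv_mono : StrictMonoOn v (Ici 0) := fun x hx y hy hxy => by
      rw [hveq x hx, hveq y hy]; exact hu_mono i hx hy hxy
    have hv_conv : StrictConvexOn ℝ (Ici 0) v := by
      refine ⟨convex_Ici 0, fun x hx y hy hxy q r hq hr hqr => ?_⟩
      have hm : q • x + r • y ∈ Ici (0:ℝ) := (convex_Ici 0) hx hy hq.le hr.le hqr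
      rw [hveq _ hm, hveq x hx, hveq y hy]
      exact (hu_conv i hi).2 hx hy hxy hq hr hqr
    refine aux_key P hatomless v hv_mono hv_cont hv_conv X hXm hX0 M hXb Q hQP
      (∫ ω, ξ i ω ∂Q) (Xv i) (hXvm i) (hXvrange i) (hbudget i) ?_
    intro Z hZm hZr hZb
    have h1 := hopt i Z hZm hZr hZb
    have e1 : ∫ ω, v (Z ω) ∂P = ∫ ω, u i (Z ω) ∂P := by
      refine integral_congr_ae ?_
      filter_upwards [hZr] with ω h
      exact hveq _ h.1
    have e2 : ∫ ω, v (Xv i ω) ∂P = ∫ ω, u i (Xv i ω) ∂P := by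
      refine integral_congr_ae ?_
      filter_upwards [hXvrange i] with ω h
      exact hveq _ h.1
    rw [e1, e2]
    exact h1
  have hall : ∀ᵐ ω ∂P, ∀ k, 0 ≤ Xv k ω ∧ Xv k ω ≤ X ω := ae_all_iff.2 hXvrange
  have part2 : ∀ i ∈ S, ∀ j ∈ S, i ≠ j → ∀ᵐ ω ∂P, Xv i ω * Xv j ω = 0 := by
    intro i hi j hj hij
    filter_upwards [part1 i hi, hall, hclear] with ω h1 hr hc
    rcases mul_eq_zero.mp h1 with h | h
    · rw [h, zero_mul]
    · have hsum : Xv i ω + ∑ k ∈ Finset.univ.erase i, Xv k ω = X ω := by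
        rw [Finset.add_sum_erase Finset.univ (fun k => Xv k ω) (Finset.mem_univ i)]
        exact hc
      have hle : Xv j ω ≤ ∑ k ∈ Finset.univ.erase i, Xv k ω :=
        Finset.single_le_sum (fun k _ => (hr k).1)
          (Finset.mem_erase.2 ⟨hij.symm, Finset.mem_univ j⟩)
      have hj0 : Xv j ω = 0 := le_antisymm (by linarith) (hr j).1
      rw [hj0, mul_zero]
  refine ⟨part1, part2, ?_⟩
  intro i hi
  have hpair : ∀ᵐ ω ∂P, ∀ j : Fin n, j ∈ S → j ≠ i → Xv i ω * Xv j ω = 0 := by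
    rw [ae_all_iff]
    intro j
    by_cases hjS : j ∈ S
    · by_cases hji : j = i
      · exact Filter.Eventually.of_forall fun ω h1 h2 => absurd hji h2
      · filter_upwards [part2 i hi j hjS (fun h => hji h.symm)] with ω h _ _
        exact h
    · exact Filter.Eventually.of_forall fun ω h1 _ => absurd h1 hjS
  filter_upwards [part1 i hi, hall, hpair] with ω h1 hr hp
  rcases mul_eq_zero.mp h1 with h | h
  · rw [h, zero_mul]
  · by_cases hzero : Xv i ω = 0
    · rw [hzero, zero_mul]
    · have hsum : ∑ j ∈ S, Xv j ω = Xv i ω := by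
        rw [← Finset.add_sum_erase S (fun j => Xv j ω) hi]
        have : ∑ j ∈ S.erase i, Xv j ω = 0 := Finset.sum_eq_zero fun j hjS => by
          have hj := Finset.mem_erase.mp hjS
          have := hp j hj.2 hj.1
          rcases mul_eq_zero.mp this with h' | h'
          · exact absurd h' hzero
          · exact h'
        rw [this, add_zero]
      rw [hsum]
      have : X ω = Xv i ω := by linarith
      rw [this, sub_self, mul_zero]
end

section
/- Local gambling improvement for cavex RDU with constant endowment: Let u: ℝ₊ → ℝ₊ be strictly increasing and differentiable, and w a weighting function with w(1/n) > 1/n. Fix y > 0 and an event A with P(A) = 1/n. For ε ≥ 0, let Z^ε = (y − ε) + nε·1_A, whose RDU value is g(ε) = u(y − ε) + (u(y + (n−1)ε) − u(y − ε))·w(1/n). Then g'(0) = n·u'(y)·(w(1/n) − 1/n) > 0, so g(ε) > u(y) for all sufficiently small ε > 0; that is, each agent strictly prefers the small counter-monotonic gamble Z^ε to the sure amount y. -/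
open Set

/-- Local gambling improvement for cavex RDU with constant endowment: with
`g(ε) = u(y−ε) + (u(y+(n−1)ε) − u(y−ε))·w(1/n)` the RDU value of the small gamble
`Z^ε = (y−ε) + nε·1_A` (where `P(A) = 1/n`), one has
`g'(0) = n·u'(y)·(w(1/n) − 1/n) > 0`, so `g(ε) > u(y)` for all small `ε > 0`. -/
theorem stmt18 {n : ℕ} (hn : 2 ≤ n)
    (u u' : ℝ → ℝ) (hu_mono : StrictMonoOn u (Ici 0))
    (hderiv : ∀ x : ℝ, 0 < x → HasDerivAt u (u' x) x)
    (hu'pos : ∀ x : ℝ, 0 < x → 0 < u' x)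
    (w : ℝ → ℝ) (hw : 1 / (n : ℝ) < w (1 / (n : ℝ)))
    (y : ℝ) (hy : 0 < y)
    (g : ℝ → ℝ)
    (hg : ∀ ε : ℝ, g ε =
      u (y - ε) + (u (y + ((n : ℝ) - 1) * ε) - u (y - ε)) * w (1 / (n : ℝ))) :
    HasDerivAt g ((n : ℝ) * u' y * (w (1 / (n : ℝ)) - 1 / (n : ℝ))) 0 ∧
    0 < (n : ℝ) * u' y * (w (1 / (n : ℝ)) - 1 / (n : ℝ)) ∧
    ∃ δ > 0, ∀ ε : ℝ, 0 < ε → ε < δ → u y < g ε := by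
  have hnpos : (0 : ℝ) < n := by positivity
  set W := w (1 / (n : ℝ)) with hW
  -- derivative of ε ↦ u (y - ε) at 0
  have h1 : HasDerivAt (fun ε : ℝ => u (y - ε)) (-u' y) 0 := by
    have hinner : HasDerivAt (fun ε : ℝ => y - ε) (-1 : ℝ) 0 := by
      simpa using (hasDerivAt_id (0:ℝ)).const_sub y
    have hu : HasDerivAt u (u' y) ((fun ε : ℝ => y - ε) 0) := by simpa using hderiv y hy
    simpa [Function.comp_def] using hu.comp 0 hinner
  have h2 : HasDerivAt (fun ε : ℝ => u (y + ((n : ℝ) - 1) * ε)) (((n : ℝ) - 1) * u' y) 0 := by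
    have hinner : HasDerivAt (fun ε : ℝ => y + ((n : ℝ) - 1) * ε) ((n : ℝ) - 1) 0 := by
      simpa using ((hasDerivAt_id (0:ℝ)).const_mul ((n : ℝ) - 1)).const_add y
    have hu : HasDerivAt u (u' y) ((fun ε : ℝ => y + ((n : ℝ) - 1) * ε) 0) := by
      simpa using hderiv y hy
    simpa [mul_comm, Function.comp_def] using hu.comp 0 hinner
  have hgderiv : HasDerivAt g ((n : ℝ) * u' y * (W - 1 / (n : ℝ))) 0 := by
    have h3 : HasDerivAt (fun ε : ℝ =>
        u (y - ε) + (u (y + ((n : ℝ) - 1) * ε) - u (y - ε)) * W)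
        (-u' y + (((n : ℝ) - 1) * u' y - -u' y) * W) 0 :=
      h1.add ((h2.sub h1).mul_const W)
    have heq : (-u' y + (((n : ℝ) - 1) * u' y - -u' y) * W)
        = (n : ℝ) * u' y * (W - 1 / (n : ℝ)) := by
      field_simp
      ring
    rw [heq] at h3
    exact h3.congr_of_eventuallyEq (Filter.Eventually.of_forall fun ε => (hg ε))
  refine ⟨hgderiv, ?_, ?_⟩
  · have := hu'pos y hy
    have : 0 < W - 1 / (n : ℝ) := by linarith
    positivity
  · -- use that slope tends to a positive limit
    have hslope : Filter.Tendsto (slope g 0) (nhdsWithin 0 {(0:ℝ)}ᶜ)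
        (nhds ((n : ℝ) * u' y * (W - 1 / (n : ℝ)))) :=
      hasDerivAt_iff_tendsto_slope.mp hgderiv
    have hpos : 0 < (n : ℝ) * u' y * (W - 1 / (n : ℝ)) := by
      have := hu'pos y hy
      have : 0 < W - 1 / (n : ℝ) := by linarith
      positivity
    have hev : ∀ᶠ ε in nhdsWithin 0 {(0:ℝ)}ᶜ, 0 < slope g 0 ε :=
      hslope.eventually (eventually_gt_nhds hpos)
    rw [Filter.eventually_iff, mem_nhdsWithin] at hev
    obtain ⟨U, hU, h0U, hsub⟩ := hev
    obtain ⟨δ, hδ, hball⟩ := Metric.isOpen_iff.mp hU 0 h0U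
    refine ⟨δ, hδ, fun ε hε hεδ => ?_⟩
    have hmem : ε ∈ U ∩ {(0:ℝ)}ᶜ := by
      constructor
      · apply hball
        simp [Real.dist_eq, abs_of_pos hε, hεδ]
      · exact fun h => hε.ne' h
    have := hsub hmem
    simp only [mem_setOf_eq, slope_def_field, sub_zero] at this
    have hg0 : g 0 = u y := by simp [hg 0]
    have := (div_pos_iff.mp this)
    rcases this with ⟨h, _⟩ | ⟨_, h⟩
    · linarith [hg0 ▸ h]
    · linarith
end

section
/- Equilibrium with no aggregate uncertainty for RDU agents: Let w be a weighting function that agrees with its concave envelope w̄ on [0, β_w] (with w̄ linear on [β_w, 1]), and let the utility be linear on [0, x_0] (normalize u = identity there). Let X = x ∈ (0, x_0] be constant, and let initial endowments (ξ_1,...,ξ_n) be nonnegative random variables summing to x with E[ξ_i] ≤ x·β_w for all i. Then for any jackpot vector J = (1_{A_1},...,1_{A_n}) with E[x·J] = E[ξ] componentwise, the pair (x·J, P) is a competitive equilibrium: for each i and any random variable Y with 0 ≤ Y ≤ x and E[Y] ≤ E[ξ_i], one has ρ_w(Y) ≤ ρ_w(x·1_{A_i}). -/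
open MeasureTheory Set

private lemma aux_support {f : ℝ → ℝ} (hf : ConcaveOn ℝ (Icc 0 1) f)
    {p : ℝ} (hp0 : 0 < p) (hp1 : p < 1) (hfp : f p ≤ f 1) :
    ∃ c : ℝ, 0 ≤ c ∧ ∀ s ∈ Icc (0:ℝ) 1, f s ≤ f p + c * (s - p) := by
  set S : Set ℝ := (fun s => (f s - f p) / (s - p)) '' Ioc p 1 with hS
  have h1mem : (1:ℝ) ∈ Ioc p 1 := right_mem_Ioc.mpr hp1
  have hne : S.Nonempty := ⟨_, mem_image_of_mem _ h1mem⟩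
  have hbdd : BddAbove S := by
    refine ⟨(f p - f 0) / (p - 0), ?_⟩
    rintro _ ⟨s, hs, rfl⟩
    exact hf.slope_anti_adjacent (left_mem_Icc.mpr zero_le_one)
      ⟨(hp0.trans hs.1).le, hs.2⟩ hp0 hs.1
  refine ⟨sSup S, ?_, ?_⟩
  · have hle : (f 1 - f p) / (1 - p) ≤ sSup S := le_csSup hbdd (mem_image_of_mem _ h1mem)
    have h0 : (0:ℝ) ≤ (f 1 - f p) / (1 - p) := div_nonneg (by linarith) (by linarith)
    linarith
  · intro s hs
    rcases lt_trichotomy s p with h | h | h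
    · have key : sSup S ≤ (f p - f s) / (p - s) := by
        apply csSup_le hne
        rintro _ ⟨u, hu, rfl⟩
        exact hf.slope_anti_adjacent hs ⟨(hp0.trans hu.1).le, hu.2⟩ h hu.1
      have hps : 0 < p - s := by linarith
      have := (le_div_iff₀ hps).mp key
      nlinarith
    · subst h; simp
    · have key : (f s - f p) / (s - p) ≤ sSup S :=
        le_csSup hbdd (mem_image_of_mem _ ⟨h, hs.2⟩)
      have hsp : 0 < s - p := by linarith
      have := (div_le_iff₀ hsp).mp key
      nlinarith

/-- Equilibrium with no aggregate uncertainty for RDU agents: with constant total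
endowment `x`, linear utility, and a weighting function `w` agreeing with its concave
envelope `w̄` on `[0, β_w]` (with `w̄` linear on `[β_w, 1]`), if each agent's endowment
satisfies `E[ξ_i] ≤ x·β_w`, then any jackpot allocation `x·J` matching the endowment
values is individually optimal at price `P`: every budget-feasible `0 ≤ Y ≤ x` satisfies
`ρ_w(Y) ≤ ρ_w(x·1_{A_i})`. -/
theorem stmt19 {Ω : Type*} [MeasurableSpace Ω] (P : Measure Ω) [IsProbabilityMeasure P]
    {n : ℕ}
    (w : ℝ → ℝ) (hw_mono : MonotoneOn w (Icc 0 1)) (hw0 : w 0 = 0) (hw1 : w 1 = 1)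
    (βw : ℝ) (hβ : βw ∈ Icc (0:ℝ) 1)
    (wbar : ℝ → ℝ) (hwbar_conc : ConcaveOn ℝ (Icc 0 1) wbar)
    (hwbar_ge : ∀ t ∈ Icc (0:ℝ) 1, w t ≤ wbar t)
    (hagree : ∀ t ∈ Icc 0 βw, wbar t = w t)
    (hlin : ∃ a b : ℝ, ∀ t ∈ Icc βw 1, wbar t = a * t + b)
    (x : ℝ) (hx : 0 < x)
    (ξ : Fin n → Ω → ℝ) (hξm : ∀ i, Measurable (ξ i)) (hξ0 : ∀ i ω, 0 ≤ ξ i ω)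
    (hξsum : ∀ ω, ∑ i, ξ i ω = x)
    (hξsmall : ∀ i, ∫ ω, ξ i ω ∂P ≤ x * βw)
    (A : Fin n → Set Ω) (hAm : ∀ i, MeasurableSet (A i))
    (hApart : Pairwise (Function.onFun Disjoint A)) (hAunion : (⋃ i, A i) = univ)
    (hmatch : ∀ i, ∫ ω, x * (A i).indicator 1 ω ∂P = ∫ ω, ξ i ω ∂P) :
    ∀ i, ∀ Y : Ω → ℝ, Measurable Y → (∀ ω, 0 ≤ Y ω ∧ Y ω ≤ x) →
      ∫ ω, Y ω ∂P ≤ ∫ ω, ξ i ω ∂P →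
      ∫ t in Ioi (0:ℝ), w ((P {ω | t < Y ω}).toReal)
        ≤ ∫ t in Ioi (0:ℝ), w ((P {ω | t < x * (A i).indicator 1 ω}).toReal) := by
  intro i Y hYm hYb hYE
  have hprob : ∀ s : Set Ω, (P s).toReal ≤ 1 := by
    intro s
    calc (P s).toReal ≤ (1 : ENNReal).toReal := ENNReal.toReal_mono ENNReal.one_ne_top prob_le_one
      _ = 1 := by simp
  set G : ℝ → ℝ := fun t => (P {ω | t < Y ω}).toReal with hGdef
  set p : ℝ := (P (A i)).toReal with hpdef
  have hp0 : 0 ≤ p := ENNReal.toReal_nonneg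
  have hp1 : p ≤ 1 := hprob _
  have hG01 : ∀ t, G t ∈ Icc (0:ℝ) 1 := fun t => ⟨ENNReal.toReal_nonneg, hprob _⟩
  have hGanti : Antitone G := by
    intro t₁ t₂ h
    exact ENNReal.toReal_mono (measure_ne_top P _)
      (measure_mono (fun ω hω => lt_of_le_of_lt h hω))
  have hGzero : ∀ t, x ≤ t → G t = 0 := by
    intro t ht
    have hset : {ω | t < Y ω} = ∅ := by
      ext ω
      simp only [mem_setOf_eq, mem_empty_iff_false, iff_false, not_lt]
      exact (hYb ω).2.trans ht
    simp [hGdef, hset]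
  have hFanti : Antitone (fun t => w (G t)) := fun t₁ t₂ h =>
    hw_mono (hG01 t₂) (hG01 t₁) (hGanti h)
  have hFint : IntegrableOn (fun t => w (G t)) (Icc 0 x) :=
    AntitoneOn.integrableOn_isCompact isCompact_Icc (hFanti.antitoneOn _)
  have hGint : IntegrableOn G (Icc 0 x) :=
    AntitoneOn.integrableOn_isCompact isCompact_Icc (hGanti.antitoneOn _)
  have hIocfin : volume (Ioc (0:ℝ) x) < ⊤ := measure_Ioc_lt_top
  have hIocvol : (volume (Ioc (0:ℝ) x)).toReal = x := by
    simp [Real.volume_Ioc, ENNReal.toReal_ofReal hx.le]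
  -- restriction of integrals to (0, x]
  have key_restrict : ∀ f : ℝ → ℝ, (∀ t, x < t → f t = 0) →
      ∫ t in Ioi (0:ℝ), f t = ∫ t in Ioc 0 x, f t := by
    intro f hf
    have hEq : ∀ t ∈ Ioi (0:ℝ), f t = (Ioc (0:ℝ) x).indicator f t := by
      intro t ht
      by_cases h : t ≤ x
      · rw [indicator_of_mem (show t ∈ Ioc (0:ℝ) x from ⟨ht, h⟩)]
      · rw [indicator_of_notMem (show t ∉ Ioc (0:ℝ) x from fun hmem => h hmem.2),
          hf t (not_le.mp h)]
    rw [setIntegral_congr_fun measurableSet_Ioi hEq, setIntegral_indicator measurableSet_Ioc,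
      inter_eq_self_of_subset_right Ioc_subset_Ioi_self]
  have hLHS : ∫ t in Ioi (0:ℝ), w (G t) = ∫ t in Ioc 0 x, w (G t) :=
    key_restrict _ (fun t ht => by rw [hGzero t ht.le, hw0])
  -- layer cake
  have hYint : Integrable Y P := by
    refine (integrable_const x).mono' hYm.aestronglyMeasurable (ae_of_all _ fun ω => ?_)
    rw [Real.norm_eq_abs, abs_of_nonneg (hYb ω).1]
    exact (hYb ω).2
  have hlayer : ∫ ω, Y ω ∂P = ∫ t in Ioc (0:ℝ) x, G t := by
    rw [hYint.integral_eq_integral_meas_lt (ae_of_all _ fun ω => (hYb ω).1)]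
    exact key_restrict _ (fun t ht => hGzero t ht.le)
  -- value of the jackpot allocation
  have hZint : ∫ ω, x * (A i).indicator 1 ω ∂P = x * p := by
    rw [integral_const_mul, integral_indicator_one (hAm i), measureReal_def]
  have hxp : x * p = ∫ ω, ξ i ω ∂P := by rw [← hmatch i, hZint]
  have hEY : ∫ ω, Y ω ∂P ≤ x * p := by rw [hxp]; exact hYE
  have hEYnn : 0 ≤ ∫ ω, Y ω ∂P := integral_nonneg fun ω => (hYb ω).1
  have hpβ : p ≤ βw := by
    have h := hξsmall i
    rw [← hxp] at h
    exact le_of_mul_le_mul_left h hx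
  -- the right-hand side equals x * w p
  have hZset : ∀ t ∈ Ioo (0:ℝ) x, {ω | t < x * (A i).indicator 1 ω} = A i := by
    intro t ht
    ext ω
    simp only [mem_setOf_eq]
    by_cases hω : ω ∈ A i
    · simp only [indicator_of_mem hω, Pi.one_apply, mul_one, hω, iff_true]
      exact ht.2
    · simp only [indicator_of_notMem hω, mul_zero, hω, iff_false, not_lt]
      exact ht.1.le
  have hZzero : ∀ t, x < t → w ((P {ω | t < x * (A i).indicator 1 ω}).toReal) = 0 := by
    intro t ht
    have hset : {ω | t < x * (A i).indicator 1 ω} = ∅ := by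
      ext ω
      simp only [mem_setOf_eq, mem_empty_iff_false, iff_false, not_lt]
      by_cases hω : ω ∈ A i
      · simp only [indicator_of_mem hω, Pi.one_apply, mul_one]; exact ht.le
      · simp only [indicator_of_notMem hω, mul_zero]; linarith [hx, ht]
    rw [hset]
    simpa using hw0
  have hRHS : ∫ t in Ioi (0:ℝ), w ((P {ω | t < x * (A i).indicator 1 ω}).toReal) = x * w p := by
    rw [key_restrict _ hZzero, integral_Ioc_eq_integral_Ioo,
      setIntegral_congr_fun measurableSet_Ioo
        (fun t ht => by rw [hZset t ht] : EqOn _ (fun _ => w p) (Ioo (0:ℝ) x)),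
      setIntegral_const]
    simp [Real.volume_Ioo, ENNReal.toReal_ofReal hx.le, smul_eq_mul, hx.le]
  rw [hRHS]
  show ∫ t in Ioi (0:ℝ), w (G t) ≤ x * w p
  rw [hLHS]
  rcases eq_or_lt_of_le hp0 with hp0' | hp0'
  · -- p = 0 : then Y = 0 a.e. and both sides vanish
    have hEY0 : ∫ ω, Y ω ∂P = 0 := le_antisymm (by rw [← hp0', mul_zero] at hEY; exact hEY) hEYnn
    have hY0 : Y =ᵐ[P] 0 := (integral_eq_zero_iff_of_nonneg (fun ω => (hYb ω).1) hYint).mp hEY0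
    have hnull : P {ω | Y ω ≠ 0} = 0 := by
      have := ae_iff.mp hY0
      simpa using this
    have hG0 : ∀ t ∈ Ioc (0:ℝ) x, w (G t) = (0:ℝ) := by
      intro t ht
      have hsub : {ω | t < Y ω} ⊆ {ω | Y ω ≠ 0} := by
        intro ω hω
        exact ne_of_gt (lt_trans ht.1 hω)
      have : P {ω | t < Y ω} = 0 := measure_mono_null hsub hnull
      simp [hGdef, this, hw0]
    rw [setIntegral_congr_fun measurableSet_Ioc hG0]
    rw [← hp0', hw0, mul_zero]
    simp
  rcases eq_or_lt_of_le hp1 with hp1' | hp1'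
  · -- p = 1
    rw [hp1', hw1, mul_one]
    calc ∫ t in Ioc (0:ℝ) x, w (G t) ≤ ∫ _t in Ioc (0:ℝ) x, (1:ℝ) := by
          refine setIntegral_mono_on (hFint.mono_set Ioc_subset_Icc_self)
            (integrableOn_const hIocfin.ne) measurableSet_Ioc ?_
          intro t _ht
          calc w (G t) ≤ w 1 := hw_mono (hG01 t) (right_mem_Icc.mpr zero_le_one) (hG01 t).2
            _ = 1 := hw1
      _ = x := by rw [setIntegral_const, measureReal_def, hIocvol, smul_eq_mul, mul_one]
  · -- main case 0 < p < 1 : supporting line of the concave envelope at p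
    have hwbarp : wbar p = w p := hagree p ⟨hp0, hpβ⟩
    have hfp : wbar p ≤ wbar 1 := by
      have h1 : (1:ℝ) ≤ wbar 1 := by
        have := hwbar_ge 1 (right_mem_Icc.mpr zero_le_one)
        rwa [hw1] at this
      have h2 : w p ≤ 1 := by
        rw [← hw1]
        exact hw_mono ⟨hp0, hp1⟩ (right_mem_Icc.mpr zero_le_one) hp1
      rw [hwbarp]; linarith
    obtain ⟨c, hc0, hcb⟩ := aux_support hwbar_conc hp0' hp1' hfp
    have hconst : IntegrableOn (fun _ : ℝ => wbar p) (Ioc 0 x) :=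
      integrableOn_const hIocfin.ne
    have hpconst : IntegrableOn (fun _ : ℝ => p) (Ioc 0 x) :=
      integrableOn_const hIocfin.ne
    have hGIoc : IntegrableOn G (Ioc 0 x) := hGint.mono_set Ioc_subset_Icc_self
    have hlinint : IntegrableOn (fun t => wbar p + c * (G t - p)) (Ioc 0 x) :=
      hconst.add ((hGIoc.sub hpconst).const_mul c)
    have step1 : ∫ t in Ioc (0:ℝ) x, w (G t)
        ≤ ∫ t in Ioc (0:ℝ) x, (wbar p + c * (G t - p)) := by
      refine setIntegral_mono_on (hFint.mono_set Ioc_subset_Icc_self) hlinint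
        measurableSet_Ioc ?_
      intro t _ht
      calc w (G t) ≤ wbar (G t) := hwbar_ge _ (hG01 t)
        _ ≤ wbar p + c * (G t - p) := hcb _ (hG01 t)
    have hB : IntegrableOn (fun t : ℝ => c * (G t - p)) (Ioc 0 x) := by
      apply Integrable.const_mul
      exact hGIoc.sub hpconst
    have step2 : ∫ t in Ioc (0:ℝ) x, (wbar p + c * (G t - p))
        = x * wbar p + c * ((∫ ω, Y ω ∂P) - x * p) := by
      rw [show (∫ t in Ioc (0:ℝ) x, (wbar p + c * (G t - p)))
            = (∫ _t in Ioc (0:ℝ) x, wbar p) + ∫ t in Ioc (0:ℝ) x, c * (G t - p) from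
          integral_add hconst hB,
        show (∫ t in Ioc (0:ℝ) x, c * (G t - p)) = c * ∫ t in Ioc (0:ℝ) x, (G t - p) from
          integral_const_mul c _,
        show (∫ t in Ioc (0:ℝ) x, (G t - p))
            = (∫ t in Ioc (0:ℝ) x, G t) - ∫ _t in Ioc (0:ℝ) x, p from
          integral_sub hGIoc hpconst,
        setIntegral_const, setIntegral_const, measureReal_def, hIocvol, ← hlayer]
      simp only [smul_eq_mul]
    have step3 : x * wbar p + c * ((∫ ω, Y ω ∂P) - x * p) ≤ x * wbar p := by
      nlinarith
    calc ∫ t in Ioc (0:ℝ) x, w (G t) ≤ x * wbar p + c * ((∫ ω, Y ω ∂P) - x * p) := by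
          rw [← step2]; exact step1
      _ ≤ x * wbar p := step3
      _ = x * w p := by rw [hwbarp]
end
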